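/- arXiv:2008.02319 — 6 statements merged into one kernel-verified Lean document; each statement's English description precedes it below -/
import Mathlib

section
/- Let G be a nonempty finite type, H : G → ℝ a function, and β ∈ ℝ. Let p(g) = exp(−β H(g))/Z with Z = Σ_{g ∈ G} exp(−β H(g)) be the Gibbs distribution. Then for every probability mass function q on G (q(g) ≥ 0, Σ_g q(g) = 1) satisfying the same energy constraint Σ_g q(g) H(g) = Σ_g p(g) H(g), the Shannon entropy satisfies −Σ_g q(g) ln q(g) ≤ −Σ_g p(g) ln p(g); that is, the Gibbs distribution maximizes entropy among all distributions with the prescribed expected energy. -/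
open Real

/-- The Gibbs distribution `p g = exp(−β H g)/Z` maximizes the Shannon entropy
`−Σ q g ln (q g)` among all probability distributions `q` on `G` with the same
expected energy `Σ q g * H g = Σ p g * H g`. -/
theorem gibbs_maximizes_entropy
    {G : Type*} [Fintype G] [Nonempty G] (H : G → ℝ) (β : ℝ)
    (Z : ℝ) (hZ : Z = ∑ g, Real.exp (-β * H g))
    (p : G → ℝ) (hp : ∀ g, p g = Real.exp (-β * H g) / Z)
    (q : G → ℝ) (hq0 : ∀ g, 0 ≤ q g) (hq1 : ∑ g, q g = 1)
    (hE : ∑ g, q g * H g = ∑ g, p g * H g) :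
    -∑ g, q g * Real.log (q g) ≤ -∑ g, p g * Real.log (p g) := by
  have hZpos : 0 < Z := by
    rw [hZ]
    exact Finset.sum_pos (fun g _ => Real.exp_pos _) Finset.univ_nonempty
  have hppos : ∀ g, 0 < p g := fun g => by
    rw [hp g]; exact div_pos (Real.exp_pos _) hZpos
  have hpsum : ∑ g, p g = 1 := by
    simp only [hp]
    rw [← Finset.sum_div, ← hZ, div_self hZpos.ne']
  have hlogp : ∀ g, Real.log (p g) = -β * H g - Real.log Z := fun g => by
    rw [hp g, Real.log_div (Real.exp_pos _).ne' hZpos.ne', Real.log_exp]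
  -- Gibbs inequality
  have key : ∑ g, q g * Real.log (p g) ≤ ∑ g, q g * Real.log (q g) := by
    have h1 : ∑ g, (q g * Real.log (p g) - q g * Real.log (q g)) ≤ 0 := by
      have : ∀ g ∈ Finset.univ, q g * Real.log (p g) - q g * Real.log (q g) ≤ p g - q g := by
        intro g _
        rcases eq_or_lt_of_le (hq0 g) with h | h
        · simp [← h, (hppos g).le]
        · have hlog : Real.log (p g / q g) ≤ p g / q g - 1 :=
            Real.log_le_sub_one_of_pos (div_pos (hppos g) h)
          have := mul_le_mul_of_nonneg_left hlog (hq0 g)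
          rw [Real.log_div (hppos g).ne' h.ne', mul_sub, mul_sub, mul_one,
            mul_div_cancel₀ _ h.ne'] at this
          linarith
      calc ∑ g, (q g * Real.log (p g) - q g * Real.log (q g))
          ≤ ∑ g, (p g - q g) := Finset.sum_le_sum this
        _ = 0 := by rw [Finset.sum_sub_distrib, hpsum, hq1]; ring
    rw [Finset.sum_sub_distrib] at h1
    linarith
  have e1 : ∑ g, q g * Real.log (p g) = ∑ g, p g * Real.log (p g) := by
    simp only [hlogp, mul_sub]
    rw [Finset.sum_sub_distrib, Finset.sum_sub_distrib, ← Finset.sum_mul, ← Finset.sum_mul,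
      hq1, hpsum]
    have : ∑ g, q g * (-β * H g) = ∑ g, p g * (-β * H g) := by
      simp only [mul_left_comm _ (-β)]
      rw [← Finset.mul_sum, ← Finset.mul_sum, hE]
    linarith
  linarith
end

section
/- For all real a, b > 0 with a ≠ b, the integral ∫₀^∞ (ln t)/((t + a)(t + b)) dt converges and equals ((ln a)² − (ln b)²)/(2(a − b)). -/
open Real MeasureTheory Set Filter

lemma aux_deriv {a b : ℝ} (ha : 0 < a) (hb : 0 < b) (hab : a ≠ b) (x : ℝ) (hx : x ∈ Ici (0:ℝ)) :
    HasDerivAt (fun t => (b-a)⁻¹ * (Real.log (t+a) - Real.log (t+b)))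
      (((x+a)*(x+b))⁻¹) x := by
  have hx0 : (0:ℝ) ≤ x := hx
  have hxa : x + a ≠ 0 := by positivity
  have hxb : x + b ≠ 0 := by positivity
  have d1 : HasDerivAt (fun t : ℝ => Real.log (t+a)) (1/(x+a)) x := by
    simpa using ((hasDerivAt_id x).add_const a).log hxa
  have d2 : HasDerivAt (fun t : ℝ => Real.log (t+b)) (1/(x+b)) x := by
    simpa using ((hasDerivAt_id x).add_const b).log hxb
  have := ((d1.sub d2).const_mul ((b-a)⁻¹))
  refine this.congr_deriv ?_
  have hba : b - a ≠ 0 := sub_ne_zero.2 (Ne.symm hab)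
  field_simp
  ring

lemma aux_tendsto {a b : ℝ} (ha : 0 < a) (hb : 0 < b) :
    Tendsto (fun t => (b-a)⁻¹ * (Real.log (t+a) - Real.log (t+b))) atTop (nhds 0) := by
  have h1 : Tendsto (fun t : ℝ => (t+a)/(t+b)) atTop (nhds 1) := by
    have h2 : Tendsto (fun t : ℝ => 1 + (a-b)/(t+b)) atTop (nhds 1) := by
      have := Tendsto.div_atTop (tendsto_const_nhds (α := ℝ) (x := a - b))
        (tendsto_atTop_add_const_right atTop b tendsto_id)
      simpa using (tendsto_const_nhds (x := (1:ℝ))).add this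
    refine h2.congr' ?_
    filter_upwards [eventually_gt_atTop (0:ℝ)] with t ht
    have : t + b ≠ 0 := by positivity
    field_simp
    ring
  have h3 : Tendsto (fun t : ℝ => Real.log ((t+a)/(t+b))) atTop (nhds 0) := by
    simpa [Function.comp_def] using (Real.continuousAt_log one_ne_zero).tendsto.comp h1
  have h4 : Tendsto (fun t : ℝ => Real.log (t+a) - Real.log (t+b)) atTop (nhds 0) := by
    refine h3.congr' ?_
    filter_upwards [eventually_gt_atTop (0:ℝ)] with t ht
    rw [Real.log_div (by positivity) (by positivity)]
  simpa using h4.const_mul ((b-a)⁻¹)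

lemma aux_intJ {a b : ℝ} (ha : 0 < a) (hb : 0 < b) (hab : a ≠ b) :
    IntegrableOn (fun t : ℝ => ((t+a)*(t+b))⁻¹) (Ioi 0) ∧
    ∫ t in Ioi (0:ℝ), ((t+a)*(t+b))⁻¹ = (Real.log a - Real.log b)/(a-b) := by
  have hpos : ∀ x ∈ Ioi (0:ℝ), 0 ≤ ((x+a)*(x+b))⁻¹ := by
    intro x hx
    have : (0:ℝ) < x := hx
    positivity
  constructor
  · exact integrableOn_Ioi_deriv_of_nonneg' (aux_deriv ha hb hab) hpos (aux_tendsto ha hb)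
  · rw [integral_Ioi_of_hasDerivAt_of_nonneg' (aux_deriv ha hb hab) hpos (aux_tendsto ha hb)]
    simp only [zero_add]
    have hba : b - a ≠ 0 := sub_ne_zero.2 (Ne.symm hab)
    have hab' : a - b ≠ 0 := sub_ne_zero.2 hab
    field_simp
    ring

lemma aux_cont {a b : ℝ} (ha : 0 < a) (hb : 0 < b) :
    ContinuousOn (fun t : ℝ => Real.log t / ((t+a)*(t+b))) (Ioi 0) := by
  apply ContinuousOn.div
  · exact Real.continuousOn_log.mono (by intro x hx; exact ne_of_gt hx)
  · fun_prop
  · intro x hx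
    have : (0:ℝ) < x := hx
    positivity

lemma aux_intG {a b : ℝ} (ha : 0 < a) (hb : 0 < b) :
    IntegrableOn (fun t : ℝ => Real.log t / ((t+a)*(t+b))) (Ioi 0) := by
  have hmeas : AEStronglyMeasurable (fun t : ℝ => Real.log t / ((t+a)*(t+b)))
      (volume.restrict (Ioi (0:ℝ))) :=
    (aux_cont ha hb).aestronglyMeasurable measurableSet_Ioi
  have h01 : IntegrableOn (fun t : ℝ => Real.log t / ((t+a)*(t+b))) (Ioc 0 1) := by
    have hlog : IntegrableOn Real.log (Ioc (0:ℝ) 1) := by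
      have hbd : IntegrableOn (fun t : ℝ => 2 * t ^ (-(1:ℝ)/2)) (Ioc 0 1) := by
        have := (intervalIntegral.intervalIntegrable_rpow' (a := 0) (b := 1)
          (r := -(1:ℝ)/2) (by norm_num))
        have h2 := this.const_mul 2
        simpa [intervalIntegrable_iff, Set.uIoc_of_le (zero_le_one' ℝ)] using h2
      refine Integrable.mono' hbd
        (Real.measurable_log.aestronglyMeasurable.restrict) ?_
      filter_upwards [ae_restrict_mem measurableSet_Ioc] with t ht
      have ht0 : (0:ℝ) < t := ht.1
      have hs : (0:ℝ) < Real.sqrt t := Real.sqrt_pos.2 ht0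
      rw [Real.norm_eq_abs]
      have h1 : |Real.log t| = -Real.log t := by
        rw [abs_of_nonpos (Real.log_nonpos ht0.le ht.2)]
      have h2 : -Real.log t = 2 * Real.log (Real.sqrt t)⁻¹ := by
        rw [Real.log_inv, Real.log_sqrt ht0.le]; ring
      have h3 : Real.log (Real.sqrt t)⁻¹ ≤ (Real.sqrt t)⁻¹ - 1 :=
        Real.log_le_sub_one_of_pos (by positivity)
      have h4 : (Real.sqrt t)⁻¹ = t ^ (-(1:ℝ)/2) := by
        rw [Real.sqrt_eq_rpow, ← Real.rpow_neg ht0.le]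
        norm_num
      rw [h1, h2]
      nlinarith [Real.rpow_nonneg ht0.le (-(1:ℝ)/2), h3, h4]
    refine Integrable.mono' (hlog.abs.const_mul ((a*b)⁻¹)) (hmeas.mono_set Ioc_subset_Ioi_self) ?_
    filter_upwards [ae_restrict_mem measurableSet_Ioc] with t ht
    have ht0 : (0:ℝ) < t := ht.1
    have hd : a * b ≤ (t+a)*(t+b) := by nlinarith
    have hd0 : (0:ℝ) < a*b := by positivity
    rw [Real.norm_eq_abs, abs_div, div_le_iff₀ (by positivity : (0:ℝ) < |(t+a)*(t+b)|)]
    rw [abs_of_pos (by positivity : (0:ℝ) < (t+a)*(t+b))]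
    calc |Real.log t| = (a*b)⁻¹ * |Real.log t| * (a*b) := by field_simp
      _ ≤ (a*b)⁻¹ * |Real.log t| * ((t+a)*(t+b)) := by
          apply mul_le_mul_of_nonneg_left hd; positivity
  have h1i : IntegrableOn (fun t : ℝ => Real.log t / ((t+a)*(t+b))) (Ioi 1) := by
    have hrpow : IntegrableOn (fun t : ℝ => 2 * t ^ (-(3:ℝ)/2)) (Ioi 1) :=
      (integrableOn_Ioi_rpow_of_lt (by norm_num) one_pos).const_mul 2
    refine Integrable.mono' hrpow (hmeas.mono_set (by
      intro x hx; exact Set.mem_Ioi.2 (lt_trans one_pos (Set.mem_Ioi.1 hx)))) ?_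
    filter_upwards [ae_restrict_mem measurableSet_Ioi] with t ht
    have ht1 : (1:ℝ) < t := ht
    have ht0 : (0:ℝ) < t := lt_trans one_pos ht1
    have hlog : |Real.log t| ≤ 2 * Real.sqrt t := by
      rw [abs_of_nonneg (Real.log_nonneg ht1.le)]
      calc Real.log t = 2 * Real.log (Real.sqrt t) := by
            rw [Real.log_sqrt ht0.le]; ring
        _ ≤ 2 * Real.sqrt t := by
            have := Real.log_le_sub_one_of_pos (Real.sqrt_pos.2 ht0)
            linarith
    have hdenom : t^2 ≤ (t+a)*(t+b) := by nlinarith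
    rw [Real.norm_eq_abs, abs_div, abs_of_pos (by positivity : (0:ℝ) < (t+a)*(t+b))]
    have h1 : |Real.log t| / ((t+a)*(t+b)) ≤ 2 * Real.sqrt t / t^2 := by
      apply div_le_div₀ (by positivity) hlog (by positivity) hdenom
    refine h1.trans ?_
    rw [Real.sqrt_eq_rpow]
    rw [show (t:ℝ)^2 = t ^ (2:ℝ) by rw [Real.rpow_two]]
    rw [mul_div_assoc, ← Real.rpow_sub ht0]
    norm_num
  have : IntegrableOn (fun t : ℝ => Real.log t / ((t+a)*(t+b))) (Ioc 0 1 ∪ Ioi 1) :=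
    h01.union h1i
  refine this.mono_set ?_
  intro x hx
  rcases le_or_gt x 1 with h | h
  · exact Or.inl ⟨hx, h⟩
  · exact Or.inr h

lemma aux_image {a b : ℝ} (ha : 0 < a) (hb : 0 < b) :
    (fun t : ℝ => a*b/t) '' Ioi 0 = Ioi 0 := by
  apply Subset.antisymm
  · rintro x ⟨t, ht, rfl⟩
    have : (0:ℝ) < t := ht
    exact Set.mem_Ioi.2 (div_pos (mul_pos ha hb) this)
  · intro x hx
    have hx0 : (0:ℝ) < x := hx
    refine ⟨a*b/x, Set.mem_Ioi.2 (div_pos (mul_pos ha hb) hx0), ?_⟩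
    field_simp

lemma aux_key {a b : ℝ} (ha : 0 < a) (hb : 0 < b) :
    ∫ t in Ioi (0:ℝ), Real.log t / ((t+a)*(t+b)) =
      ∫ t in Ioi (0:ℝ), (Real.log (a*b) * ((t+a)*(t+b))⁻¹ - Real.log t / ((t+a)*(t+b))) := by
  have hderiv : ∀ x ∈ Ioi (0:ℝ), HasDerivWithinAt (fun t : ℝ => a*b/t)
      (-(a*b)/x^2) (Ioi 0) x := by
    intro x hx
    have hx0 : (0:ℝ) < x := hx
    have : HasDerivAt (fun t : ℝ => a*b/t) (-(a*b)/x^2) x := by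
      have := (hasDerivAt_inv hx0.ne').const_mul (a*b)
      simpa [div_eq_mul_inv, neg_div, mul_comm] using this
    exact this.hasDerivWithinAt
  have hinj : InjOn (fun t : ℝ => a*b/t) (Ioi 0) := by
    intro s hs t ht h
    have hs0 : (0:ℝ) < s := hs
    have ht0 : (0:ℝ) < t := ht
    have hab : (0:ℝ) < a*b := by positivity
    field_simp at h
    exact h.symm
  have := integral_image_eq_integral_abs_deriv_smul measurableSet_Ioi hderiv hinj
    (fun t : ℝ => Real.log t / ((t+a)*(t+b)))
  rw [aux_image ha hb] at this
  rw [this]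
  apply setIntegral_congr_fun measurableSet_Ioi
  intro t ht
  have ht0 : (0:ℝ) < t := ht
  have habp : (0:ℝ) < a*b := by positivity
  simp only [smul_eq_mul]
  rw [abs_div, abs_neg, abs_of_pos habp, abs_of_pos (by positivity : (0:ℝ) < t^2)]
  rw [Real.log_div habp.ne' ht0.ne']
  have h1 : (0:ℝ) < a*b/t + a := by positivity
  have h2 : (0:ℝ) < a*b/t + b := by positivity
  field_simp
  ring

/-- For `a, b > 0` with `a ≠ b`, `∫₀^∞ (ln t)/((t+a)(t+b)) dt` converges and equals
`((ln a)² − (ln b)²)/(2(a − b))`. -/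
theorem integral_log_div_linear_linear
    (a b : ℝ) (ha : 0 < a) (hb : 0 < b) (hab : a ≠ b) :
    IntegrableOn (fun t : ℝ => Real.log t / ((t + a) * (t + b))) (Set.Ioi 0) ∧
      ∫ t in Set.Ioi (0 : ℝ), Real.log t / ((t + a) * (t + b)) =
        ((Real.log a) ^ 2 - (Real.log b) ^ 2) / (2 * (a - b)) := by
  have hInt := aux_intG ha hb
  refine ⟨hInt, ?_⟩
  obtain ⟨hJint, hJval⟩ := aux_intJ ha hb hab
  have hkey := aux_key ha hb
  rw [integral_sub ((hJint.const_mul (Real.log (a*b)))) hInt,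
    MeasureTheory.integral_const_mul, hJval] at hkey
  set I := ∫ t in Set.Ioi (0 : ℝ), Real.log t / ((t + a) * (t + b)) with hI
  have h2I : 2 * I = Real.log (a*b) * ((Real.log a - Real.log b)/(a-b)) := by linarith
  have habne : a - b ≠ 0 := sub_ne_zero.2 hab
  rw [Real.log_mul ha.ne' hb.ne'] at h2I
  have : I = (Real.log a + Real.log b) * ((Real.log a - Real.log b)/(a-b)) / 2 := by
    linarith
  rw [this]
  field_simp
  ring
end

section
/- For every real x > 0, the function t ↦ ln(t/x)/((1 + xt)(t − x)) on (0, ∞), extended by its limiting value 1/(x(1 + x²)) at t = x (the singularity at t = x is removable), is Lebesgue integrable on (0, ∞) and ∫₀^∞ ln(t/x)/((1 + xt)(t − x)) dt = (2/(1 + x²))·((ln x)² + π²/4). -/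
open Real MeasureTheory

namespace ILRRS

open Set

lemma intP : IntegrableOn (fun u : ℝ => -Real.log u) (Set.Ioo 0 1) := by
  have h1 : IntegrableOn (fun u : ℝ => 2 * u ^ (-(1:ℝ)/2)) (Set.Ioo 0 1) := by
    have := (intervalIntegral.intervalIntegrable_rpow' (a := 0) (b := 1)
      (r := -(1:ℝ)/2) (by norm_num))
    rw [intervalIntegrable_iff_integrableOn_Ioo_of_le zero_le_one] at this
    exact this.const_mul 2
  refine h1.integrable.mono (Real.measurable_log.neg.aestronglyMeasurable) ?_
  rw [ae_restrict_iff' measurableSet_Ioo]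
  refine Filter.Eventually.of_forall fun u hu => ?_
  have hu0 : 0 < u := hu.1
  have hu1 : u < 1 := hu.2
  have hlog : 0 ≤ -Real.log u := by
    simpa using Real.log_nonpos hu0.le hu1.le
  have hs : Real.sqrt u ≤ 1 := by
    rw [show (1:ℝ) = Real.sqrt 1 by simp]
    exact Real.sqrt_le_sqrt hu1.le
  have hs0 : 0 < Real.sqrt u := Real.sqrt_pos.2 hu0
  have key : -Real.log u ≤ 2 * (Real.sqrt u)⁻¹ := by
    have h2 : Real.log (Real.sqrt u) = Real.log u / 2 := Real.log_sqrt hu0.le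
    have h3 : Real.log ((Real.sqrt u)⁻¹) ≤ (Real.sqrt u)⁻¹ - 1 :=
      Real.log_le_sub_one_of_pos (by positivity)
    rw [Real.log_inv, h2] at h3
    have : (Real.sqrt u)⁻¹ - 1 ≤ (Real.sqrt u)⁻¹ := by linarith
    nlinarith
  have hrw : u ^ (-(1:ℝ)/2) = (Real.sqrt u)⁻¹ := by
    rw [Real.sqrt_eq_rpow, ← Real.rpow_neg hu0.le]
    norm_num
  rw [Real.norm_eq_abs, Real.norm_eq_abs, abs_of_nonneg hlog, hrw]
  have : 0 ≤ 2 * (Real.sqrt u)⁻¹ := by positivity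
  rw [abs_of_nonneg this]
  exact key

lemma intDom {h : ℝ → ℝ} (hc : ∀ u ∈ Set.Ioo (0:ℝ) 1, ContinuousAt h u) (C D : ℝ)
    (hb : ∀ u ∈ Set.Ioo (0:ℝ) 1, |h u| ≤ C * (-Real.log u) + D) :
    IntegrableOn h (Set.Ioo 0 1) := by
  have hg : IntegrableOn (fun u : ℝ => C * (-Real.log u) + D) (Set.Ioo 0 1) :=
    (intP.const_mul C).add (integrableOn_const (by simp) (by simp))
  refine hg.integrable.mono ?_ ?_
  · exact (ContinuousOn.aestronglyMeasurable
      (fun u hu => (hc u hu).continuousWithinAt) measurableSet_Ioo)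
  · rw [ae_restrict_iff' measurableSet_Ioo]
    refine Filter.Eventually.of_forall fun u hu => ?_
    rw [Real.norm_eq_abs, Real.norm_eq_abs]
    exact (hb u hu).trans (le_abs_self _)

lemma Pnonneg {u : ℝ} (hu : u ∈ Set.Ioo (0:ℝ) 1) : 0 ≤ -Real.log u := by
  simpa using Real.log_nonpos hu.1.le hu.2.le

lemma Pbound {u : ℝ} (hu : u ∈ Set.Ioo (0:ℝ) 1) :
    -Real.log u / (1 - u) ≤ 2 * (-Real.log u) + 2 := by
  have hu0 := hu.1; have hu1 := hu.2
  have hP := Pnonneg hu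
  rcases le_or_gt u (1/2) with h | h
  · have h1 : 1 - u > 0 := by linarith
    have : -Real.log u / (1 - u) ≤ 2 * (-Real.log u) := by
      rw [div_le_iff₀ h1]; nlinarith
    linarith
  · have hlog : -Real.log u * u ≤ 1 - u := by
      have h3 := Real.log_le_sub_one_of_pos (x := u⁻¹) (by positivity)
      rw [Real.log_inv] at h3
      have h4 := mul_le_mul_of_nonneg_right h3 hu0.le
      rw [sub_mul, inv_mul_cancel₀ hu0.ne'] at h4
      linarith
    have h1 : 1 - u > 0 := by linarith
    have h5 : -Real.log u / (1 - u) ≤ 1 / u := by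
      rw [div_le_div_iff₀ h1 hu.1]
      nlinarith
    have h2 : 1 / u ≤ 2 := by rw [div_le_iff₀ hu.1]; linarith
    linarith

lemma intEn (n : ℕ) : IntegrableOn (fun u : ℝ => u ^ n * (-Real.log u)) (Set.Ioo 0 1) := by
  refine intDom (fun u hu => ?_) 1 0 (fun u hu => ?_)
  · exact (continuousAt_pow _ _).mul ((Real.continuousAt_log hu.1.ne').neg)
  · have h1 : 0 ≤ -Real.log u := by simpa using Real.log_nonpos hu.1.le hu.2.le
    have h2 : u ^ n ≤ 1 := pow_le_one₀ hu.1.le hu.2.le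
    have h3 : 0 ≤ u ^ n := pow_nonneg hu.1.le n
    rw [abs_of_nonneg (mul_nonneg h3 h1)]
    nlinarith

lemma En (n : ℕ) :
    ∫ u in Set.Ioo (0:ℝ) 1, u ^ n * (-Real.log u) = 1 / ((n : ℝ) + 1) ^ 2 := by
  have hca : Continuous fun u : ℝ => u ^ (n+1) * (1 / ((n:ℝ)+1)^2) - u ^ n * (u * Real.log u) / ((n:ℝ)+1) := by
    have := Real.continuous_mul_log
    fun_prop
  have hFTC := intervalIntegral.integral_eq_sub_of_hasDerivAt_of_le (a := 0) (b := 1)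
    (f := fun u : ℝ => u ^ (n+1) * (1 / ((n:ℝ)+1)^2) - u ^ n * (u * Real.log u) / ((n:ℝ)+1))
    (f' := fun u : ℝ => u ^ n * (-Real.log u)) zero_le_one hca.continuousOn
    (fun u hu => ?_) ?_
  · rw [← integral_Ioc_eq_integral_Ioo, ← intervalIntegral.integral_of_le zero_le_one, hFTC]
    simp
  · have h1 : HasDerivAt (fun u : ℝ => u ^ (n+1)) (((n:ℝ)+1) * u ^ n) u := by
      simpa using hasDerivAt_pow (n+1) u
    have h2 : HasDerivAt (fun u : ℝ => u ^ n) ((n:ℝ) * u ^ (n-1)) u := by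
      simpa using hasDerivAt_pow n u
    have h3 : HasDerivAt (fun u : ℝ => u * Real.log u) (Real.log u + 1) u :=
      Real.hasDerivAt_mul_log hu.1.ne'
    have h4 := ((h1.mul_const (1 / ((n:ℝ)+1)^2)).sub ((h2.mul h3).div_const ((n:ℝ)+1)))
    have hn : (n:ℝ) * u ^ (n-1) * (u * Real.log u) = (n:ℝ) * u ^ n * Real.log u := by
      cases n with
      | zero => simp
      | succ m => rw [Nat.add_sub_cancel, pow_succ]; ring
    rw [hn] at h4
    convert h4 using 1
    · rfl
    have hne : ((n:ℝ)+1) ≠ 0 := by positivity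
    field_simp
    ring
  · rw [intervalIntegrable_iff_integrableOn_Ioo_of_le zero_le_one]
    exact intEn n

lemma hs1 : HasSum (fun n : ℕ => 1 / ((n : ℝ) + 1) ^ 2) (Real.pi ^ 2 / 6) := by
  have h := hasSum_zeta_two
  have h2 : HasSum (fun n : ℕ => (1:ℝ) / ((n+1 : ℕ) : ℝ) ^ 2) (Real.pi ^ 2 / 6) :=
    (hasSum_nat_add_iff (f := fun n : ℕ => (1 : ℝ) / (n : ℝ) ^ 2) 1).2 (by simpa using h)
  convert h2 using 2
  push_cast
  ring

lemma intK0 : IntegrableOn (fun u : ℝ => -Real.log u / (1 - u)) (Set.Ioo 0 1) := by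
  refine intDom (fun u hu => ?_) 2 2 (fun u hu => ?_)
  · exact ((Real.continuousAt_log hu.1.ne').neg).div
      ((continuous_const.sub continuous_id).continuousAt)
      (by simp; intro h; nlinarith [hu.2])
  · have h1 : 1 - u > 0 := by linarith [hu.2]
    rw [abs_of_nonneg (div_nonneg (Pnonneg hu) h1.le)]
    exact Pbound hu

lemma K0 : ∫ u in Set.Ioo (0:ℝ) 1, -Real.log u / (1 - u) = Real.pi ^ 2 / 6 := by
  have swap := MeasureTheory.integral_tsum_of_summable_integral_norm
    (μ := volume.restrict (Set.Ioo (0:ℝ) 1))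
    (F := fun (n : ℕ) (u : ℝ) => u ^ n * (-Real.log u)) (fun n => intEn n) ?_
  · have h1 : ∀ u ∈ Set.Ioo (0:ℝ) 1, (∑' n : ℕ, u ^ n * (-Real.log u)) = -Real.log u / (1 - u) := by
      intro u hu
      rw [tsum_mul_right, tsum_geometric_of_lt_one hu.1.le hu.2]
      rw [div_eq_mul_inv, mul_comm]
    rw [setIntegral_congr_fun measurableSet_Ioo h1] at swap
    rw [← swap]
    have h2 : ∀ n : ℕ, (∫ u in Set.Ioo (0:ℝ) 1, u ^ n * (-Real.log u)) = 1 / ((n:ℝ)+1)^2 :=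
      fun n => En n
    rw [tsum_congr h2, hs1.tsum_eq]
  · have : ∀ n : ℕ, (∫ u in Set.Ioo (0:ℝ) 1, ‖u ^ n * (-Real.log u)‖) = 1/((n:ℝ)+1)^2 := by
      intro n
      rw [← En n]
      refine setIntegral_congr_fun measurableSet_Ioo (fun u hu => ?_)
      rw [Real.norm_eq_abs, abs_of_nonneg (mul_nonneg (pow_nonneg hu.1.le n) (Pnonneg hu))]
    rw [funext this]
    exact hs1.summable

lemma K2bound {u : ℝ} (hu : u ∈ Set.Ioo (0:ℝ) 1) :
    u * (-Real.log u) / (1 - u^2) ≤ 2 * (-Real.log u) + 2 := by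
  have h1 : 0 < 1 - u := by linarith [hu.2]
  have h2 : 0 < 1 + u := by linarith [hu.1]
  have key : u * (-Real.log u) / (1 - u^2) ≤ -Real.log u / (1 - u) := by
    rw [div_le_div_iff₀ (by nlinarith) h1]
    have := Pnonneg hu
    nlinarith
  exact key.trans (Pbound hu)

lemma intK2 : IntegrableOn (fun u : ℝ => u * (-Real.log u) / (1 - u^2)) (Set.Ioo 0 1) := by
  refine intDom (fun u hu => ?_) 2 2 (fun u hu => ?_)
  · exact ((continuousAt_id.mul ((Real.continuousAt_log hu.1.ne').neg)).div
      ((continuous_const.sub (continuous_pow 2)).continuousAt)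
      (by simp; nlinarith [hu.1, hu.2]))
  · have h1 : 0 < 1 - u^2 := by nlinarith [hu.1, hu.2]
    rw [abs_of_nonneg (div_nonneg (mul_nonneg hu.1.le (Pnonneg hu)) h1.le)]
    exact K2bound hu

lemma hs2 : HasSum (fun n : ℕ => 1 / ((2*(n:ℝ) + 2)) ^ 2) (Real.pi ^ 2 / 24) := by
  have h := hs1.mul_left (1/4)
  have e1 : (fun n : ℕ => 1 / ((2*(n:ℝ) + 2)) ^ 2) = fun n : ℕ => (1/4) * (1 / ((n:ℝ)+1)^2) := by
    funext n; field_simp; ring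
  rw [e1, show Real.pi ^ 2 / 24 = (1/4) * (Real.pi^2/6) by ring]
  exact h

lemma K2 : ∫ u in Set.Ioo (0:ℝ) 1, u * (-Real.log u) / (1 - u^2) = Real.pi ^ 2 / 24 := by
  have swap := MeasureTheory.integral_tsum_of_summable_integral_norm
    (μ := volume.restrict (Set.Ioo (0:ℝ) 1))
    (F := fun (n : ℕ) (u : ℝ) => u ^ (2*n+1) * (-Real.log u)) (fun n => intEn _) ?_
  · have h1 : ∀ u ∈ Set.Ioo (0:ℝ) 1, (∑' n : ℕ, u ^ (2*n+1) * (-Real.log u))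
        = u * (-Real.log u) / (1 - u^2) := by
      intro u hu
      have hg : (∑' n : ℕ, (u^2) ^ n) = (1 - u^2)⁻¹ :=
        tsum_geometric_of_lt_one (by positivity) (by nlinarith [hu.1, hu.2])
      calc (∑' n : ℕ, u ^ (2*n+1) * (-Real.log u))
          = ∑' n : ℕ, (u^2)^n * (u * (-Real.log u)) := by
            refine tsum_congr fun n => ?_
            rw [← pow_mul, pow_add, pow_one]
            ring
        _ = (1 - u^2)⁻¹ * (u * (-Real.log u)) := by rw [tsum_mul_right, hg]
        _ = u * (-Real.log u) / (1 - u^2) := by ring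
    rw [setIntegral_congr_fun measurableSet_Ioo h1] at swap
    rw [← swap]
    have h2 : ∀ n : ℕ, (∫ u in Set.Ioo (0:ℝ) 1, u ^ (2*n+1) * (-Real.log u))
        = 1/((2*(n:ℝ))+2)^2 := by
      intro n
      rw [En (2*n+1)]
      push_cast
      ring_nf
    rw [tsum_congr h2]
    exact hs2.tsum_eq
  · have : ∀ n : ℕ, (∫ u in Set.Ioo (0:ℝ) 1, ‖u ^ (2*n+1) * (-Real.log u)‖)
        = 1/((2*(n:ℝ)+2))^2 := by
      intro n
      have := En (2*n+1)
      push_cast at this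
      rw [show ((2:ℝ)*n+2) = (2*n+1)+1 by ring, ← this]
      refine setIntegral_congr_fun measurableSet_Ioo (fun u hu => ?_)
      rw [Real.norm_eq_abs, abs_of_nonneg (mul_nonneg (pow_nonneg hu.1.le _) (Pnonneg hu))]
    rw [funext this]
    exact hs2.summable

lemma intM : IntegrableOn (fun u : ℝ => -Real.log u / (1 + u)) (Set.Ioo 0 1) := by
  refine intDom (fun u hu => ?_) 1 0 (fun u hu => ?_)
  · exact ((Real.continuousAt_log hu.1.ne').neg).div
      ((continuous_const.add continuous_id).continuousAt) (by simp; nlinarith [hu.1])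
  · have h1 : 0 < 1 + u := by linarith [hu.1]
    have h2 : 1 ≤ 1 + u := by linarith [hu.1]
    rw [abs_of_nonneg (div_nonneg (Pnonneg hu) h1.le)]
    calc -Real.log u / (1 + u) ≤ -Real.log u / 1 := by
          apply div_le_div_of_nonneg_left (Pnonneg hu) one_pos h2
      _ = 1 * (-Real.log u) + 0 := by ring

lemma M : ∫ u in Set.Ioo (0:ℝ) 1, -Real.log u / (1 + u) = Real.pi ^ 2 / 12 := by
  have hpt : ∀ u ∈ Set.Ioo (0:ℝ) 1, -Real.log u / (1 + u)
      = -Real.log u / (1 - u) - 2 * (u * (-Real.log u) / (1 - u^2)) := by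
    intro u hu
    have h1 : (1:ℝ) - u ≠ 0 := by intro h; nlinarith [hu.2, sub_eq_zero.1 h]
    have h2 : (1:ℝ) + u ≠ 0 := by nlinarith [hu.1]
    have h3 : (1:ℝ) - u^2 ≠ 0 := by nlinarith [hu.1, hu.2]
    field_simp
    ring
  rw [setIntegral_congr_fun measurableSet_Ioo hpt, integral_sub intK0 ((intK2).const_mul 2),
    MeasureTheory.integral_const_mul, K0, K2]
  ring

lemma intW {s : ℝ} (hs : 0 < s) :
    IntegrableOn (fun u : ℝ => -Real.log u * (1/(1+s*u)^2 - 1/(u+s)^2)) (Set.Ioo 0 1) := by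
  refine intDom (fun u hu => ?_) (1 + 1/s^2) 0 (fun u hu => ?_)
  · have h1 : (1+s*u) ≠ 0 := by nlinarith [hu.1]
    have h2 : (u+s) ≠ 0 := by nlinarith [hu.1]
    fun_prop (disch := first | exact pow_ne_zero 2 h1 | exact pow_ne_zero 2 h2 | exact hu.1.ne')
  · have h1 : (1:ℝ) ≤ (1+s*u)^2 := by nlinarith [hu.1, mul_pos hs hu.1, sq_nonneg (s*u)]
    have h2 : s^2 ≤ (u+s)^2 := by nlinarith [hu.1]
    have hs2 : (0:ℝ) < s^2 := by positivity
    have b1 : 1/(1+s*u)^2 ≤ 1 := by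
      rw [div_le_one (by nlinarith [hu.1])]; exact h1
    have b2 : 1/(u+s)^2 ≤ 1/s^2 := by
      apply div_le_div_of_nonneg_left one_pos.le hs2 h2 |>.trans_eq rfl
    have b1' : (0:ℝ) < 1/(1+s*u)^2 := by positivity
    have b2' : (0:ℝ) < 1/(u+s)^2 :=
      div_pos one_pos (pow_pos (by linarith [hu.1] : (0:ℝ) < u+s) 2)
    rw [abs_mul, abs_of_nonneg (Pnonneg hu)]
    have : |1/(1+s*u)^2 - 1/(u+s)^2| ≤ 1 + 1/s^2 := by
      rw [abs_sub_le_iff]; constructor <;> nlinarith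
    calc -Real.log u * |1/(1+s*u)^2 - 1/(u+s)^2| ≤ -Real.log u * (1 + 1/s^2) :=
          mul_le_mul_of_nonneg_left this (Pnonneg hu)
      _ = (1 + 1/s^2) * (-Real.log u) + 0 := by ring

lemma innerInt {s : ℝ} (hs : 0 < s) :
    ∫ u in Set.Ioo (0:ℝ) 1, -Real.log u * (1/(1+s*u)^2 - 1/(u+s)^2) = Real.log s / s := by
  set H : ℝ → ℝ := fun u =>
    (u * Real.log u) * ((1 - s^2)/(s*(1+s*u)*(u+s))) + (1/s)*(Real.log (1+s*u) - Real.log (u+s))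
    with hH
  have hcont : ContinuousOn H (Set.Icc 0 1) := by
    refine ContinuousOn.add
      (ContinuousOn.mul Real.continuous_mul_log.continuousOn
        (ContinuousOn.div continuousOn_const (by fun_prop) (fun u hu => ?_)))
      (ContinuousOn.mul continuousOn_const
        (ContinuousOn.sub
          (ContinuousOn.log (by fun_prop) (fun u hu => ?_))
          (ContinuousOn.log (by fun_prop) (fun u hu => ?_))))
    · have h0 : 0 ≤ u := hu.1
      have : (0:ℝ) < s*(1+s*u)*(u+s) := by
        apply mul_pos (mul_pos hs (by nlinarith)) (by linarith)
      exact this.ne'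
    · have h0 : 0 ≤ u := hu.1
      have : (0:ℝ) < 1+s*u := by nlinarith
      exact this.ne'
    · have h0 : 0 ≤ u := hu.1
      have : (0:ℝ) < u+s := by linarith
      exact this.ne'
  have hderiv : ∀ u ∈ Set.Ioo (0:ℝ) 1,
      HasDerivAt H (-Real.log u * (1/(1+s*u)^2 - 1/(u+s)^2)) u := by
    intro u hu
    have hu0 : 0 < u := hu.1
    have h1 : (0:ℝ) < 1+s*u := by positivity
    have h2 : (0:ℝ) < u+s := by positivity
    have hD : (0:ℝ) < s*(1+s*u)*(u+s) := by positivity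
    have d1 : HasDerivAt (fun u : ℝ => u * Real.log u) (Real.log u + 1) u :=
      Real.hasDerivAt_mul_log hu0.ne'
    have dD : HasDerivAt (fun u : ℝ => s*(1+s*u)*(u+s)) (s*s*(u+s) + s*(1+s*u)) u := by
      have e1 : HasDerivAt (fun u : ℝ => s*(1+s*u)) (s*s) u := by
        simpa using ((hasDerivAt_id u).const_mul s |>.const_add 1).const_mul s
      have e2 : HasDerivAt (fun u : ℝ => u+s) 1 u := (hasDerivAt_id u).add_const s
      simpa [Pi.mul_def] using e1.mul e2
    have dρ : HasDerivAt (fun u : ℝ => (1 - s^2)/(s*(1+s*u)*(u+s)))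
        ((0 * (s*(1+s*u)*(u+s)) - (1-s^2) * (s*s*(u+s) + s*(1+s*u)))/(s*(1+s*u)*(u+s))^2) u :=
      (hasDerivAt_const u (1-s^2)).div dD hD.ne'
    have d2 : HasDerivAt (fun u : ℝ => Real.log (1+s*u)) (s/(1+s*u)) u := by
      have := ((hasDerivAt_id u).const_mul s |>.const_add 1).log h1.ne'
      simpa using this
    have d3 : HasDerivAt (fun u : ℝ => Real.log (u+s)) (1/(u+s)) u := by
      have := ((hasDerivAt_id u).add_const s).log h2.ne'
      simpa using this
    have final := (d1.mul dρ).add (((d2.sub d3)).const_mul (1/s))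
    rw [hH]
    convert final using 1
    · rfl
    · rfl
    · rfl
    have hs' : s ≠ 0 := hs.ne'
    field_simp
    ring
  have hint : IntervalIntegrable (fun u : ℝ => -Real.log u * (1/(1+s*u)^2 - 1/(u+s)^2)) volume 0 1 := by
    rw [intervalIntegrable_iff_integrableOn_Ioo_of_le zero_le_one]
    exact intW hs
  have hFTC := intervalIntegral.integral_eq_sub_of_hasDerivAt_of_le zero_le_one hcont hderiv hint
  rw [← integral_Ioc_eq_integral_Ioo, ← intervalIntegral.integral_of_le zero_le_one, hFTC, hH]
  simp [Real.log_one]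
  field_simp

lemma intG {s : ℝ} (hs : 0 < s) :
    IntegrableOn (fun u : ℝ => -Real.log u * (s/(1+s*u) + 1/(u+s))) (Set.Ioo 0 1) := by
  refine intDom (fun u hu => ?_) (s + 1/s) 0 (fun u hu => ?_)
  · have h1 : (1+s*u) ≠ 0 := by nlinarith [hu.1, mul_pos hs hu.1]
    have h2 : (u+s) ≠ 0 := by nlinarith [hu.1]
    fun_prop (disch := first | exact h1 | exact h2 | exact hu.1.ne')
  · have hu0 := hu.1
    have h1 : (0:ℝ) < 1+s*u := by nlinarith [mul_pos hs hu0]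
    have h2 : (0:ℝ) < u+s := by linarith
    have b1 : s/(1+s*u) ≤ s := by
      rw [div_le_iff₀ h1]; nlinarith [mul_pos hs hu0]
    have b2 : 1/(u+s) ≤ 1/s := by
      apply div_le_div_of_nonneg_left one_pos.le hs (by linarith)
    have bpos : 0 ≤ s/(1+s*u) + 1/(u+s) := by positivity
    rw [abs_mul, abs_of_nonneg (Pnonneg hu), abs_of_nonneg bpos]
    calc -Real.log u * (s/(1+s*u) + 1/(u+s)) ≤ -Real.log u * (s + 1/s) :=
          mul_le_mul_of_nonneg_left (by linarith) (Pnonneg hu)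
      _ = (s + 1/s) * (-Real.log u) + 0 := by ring

lemma Gdiff {a b : ℝ} (ha : 0 < a) (hab : a ≤ b) :
    (∫ u in Set.Ioo (0:ℝ) 1, -Real.log u * (b/(1+b*u) + 1/(u+b)))
      - (∫ u in Set.Ioo (0:ℝ) 1, -Real.log u * (a/(1+a*u) + 1/(u+a)))
      = (Real.log b)^2/2 - (Real.log a)^2/2 := by
  have hb : 0 < b := lt_of_lt_of_le ha hab
  set W : ℝ → ℝ → ℝ := fun u s => -Real.log u * (1/(1+s*u)^2 - 1/(u+s)^2) with hW
  -- product integrability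
  have hmeas : AEStronglyMeasurable (fun p : ℝ × ℝ => W p.1 p.2)
      ((volume.restrict (Set.Ioo 0 1)).prod (volume.restrict (Set.Ioc a b))) := by
    rw [Measure.prod_restrict]
    refine ContinuousOn.aestronglyMeasurable ?_ (measurableSet_Ioo.prod measurableSet_Ioc)
    intro p hp
    have hp1 : p.1 ∈ Set.Ioo (0:ℝ) 1 := hp.1
    have hp2 : p.2 ∈ Set.Ioc a b := hp.2
    have h1 : (1+p.2*p.1) ≠ 0 := by nlinarith [hp1.1, hp2.1, mul_pos (ha.trans hp2.1) hp1.1]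
    have h2 : (p.1+p.2) ≠ 0 := by nlinarith [hp1.1, hp2.1]
    apply ContinuousAt.continuousWithinAt
    have hlog : ContinuousAt (fun p : ℝ × ℝ => Real.log p.1) p :=
      (Real.continuousAt_log hp1.1.ne').comp continuousAt_fst
    fun_prop (disch := first | exact pow_ne_zero 2 h1 | exact pow_ne_zero 2 h2 | exact hp1.1.ne')
  have hprod : Integrable (fun p : ℝ × ℝ => W p.1 p.2)
      ((volume.restrict (Set.Ioo 0 1)).prod (volume.restrict (Set.Ioc a b))) := by
    have hbound : Integrable (fun p : ℝ × ℝ => (-Real.log p.1) * (1 + 1/a^2))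
        ((volume.restrict (Set.Ioo 0 1)).prod (volume.restrict (Set.Ioc a b))) :=
      Integrable.mul_prod intP (integrable_const _)
    refine hbound.mono hmeas ?_
    rw [Measure.prod_restrict, ae_restrict_iff' (measurableSet_Ioo.prod measurableSet_Ioc)]
    refine Filter.Eventually.of_forall fun p hp => ?_
    have hp1 : p.1 ∈ Set.Ioo (0:ℝ) 1 := hp.1
    have hp2 : p.2 ∈ Set.Ioc a b := hp.2
    have hu0 := hp1.1
    have hs0 : a < p.2 := hp2.1
    have h1 : (0:ℝ) < 1+p.2*p.1 := by nlinarith [mul_pos (ha.trans hs0) hu0]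
    have h2 : a < p.1+p.2 := by linarith
    have e1 : 1/(1+p.2*p.1)^2 ≤ 1 := by
      rw [div_le_one (by positivity)]; nlinarith [mul_pos (ha.trans hs0) hu0]
    have e2 : 1/(p.1+p.2)^2 ≤ 1/a^2 := by
      apply div_le_div_of_nonneg_left one_pos.le (by positivity)
      nlinarith
    have e1' : (0:ℝ) < 1/(1+p.2*p.1)^2 := by positivity
    have e2' : (0:ℝ) < 1/(p.1+p.2)^2 := div_pos one_pos (by nlinarith)
    rw [Real.norm_eq_abs, Real.norm_eq_abs, hW]
    simp only []
    rw [abs_mul, abs_of_nonneg (Pnonneg hp1)]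
    have habs : |1/(1+p.2*p.1)^2 - 1/(p.1+p.2)^2| ≤ 1 + 1/a^2 := by
      rw [abs_sub_le_iff]; constructor <;> nlinarith
    have hrhs : 0 ≤ (-Real.log p.1) * (1 + 1/a^2) := by
      apply mul_nonneg (Pnonneg hp1); positivity
    rw [abs_of_nonneg hrhs]
    exact mul_le_mul_of_nonneg_left habs (Pnonneg hp1)
  have swap := MeasureTheory.integral_integral_swap (f := W) hprod
  -- LHS of swap
  have hLHS : (∫ u in Set.Ioo (0:ℝ) 1, ∫ s in Set.Ioc a b, W u s)
      = (∫ u in Set.Ioo (0:ℝ) 1, -Real.log u * (b/(1+b*u) + 1/(u+b)))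
        - (∫ u in Set.Ioo (0:ℝ) 1, -Real.log u * (a/(1+a*u) + 1/(u+a))) := by
    rw [← integral_sub (intG hb) (intG ha)]
    refine setIntegral_congr_fun measurableSet_Ioo (fun u hu => ?_)
    have hu0 := hu.1
    have hFTC := intervalIntegral.integral_eq_sub_of_hasDerivAt_of_le (a := a) (b := b)
      (f := fun s => -Real.log u * (s/(1+s*u) + 1/(u+s)))
      (f' := fun s => W u s) hab ?_ ?_ ?_
    · rw [← intervalIntegral.integral_of_le hab] at *
      rw [hFTC]
    · -- continuity in s on Icc a b
      refine (continuousOn_const.mul (ContinuousOn.add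
        (ContinuousOn.div continuousOn_id (by fun_prop) (fun s hs => ?_))
        (ContinuousOn.div continuousOn_const (by fun_prop) (fun s hs => ?_))))
      · nlinarith [hs.1, mul_pos (ha.trans_le hs.1) hu0]
      · nlinarith [hs.1]
    · intro s hs
      have hs0 : 0 < s := ha.trans hs.1
      have h1 : (0:ℝ) < 1+s*u := by nlinarith [mul_pos hs0 hu0]
      have h2 : (0:ℝ) < u+s := by linarith
      have d1 : HasDerivAt (fun s : ℝ => s/(1+s*u)) (1/(1+s*u)^2) s := by
        have := (hasDerivAt_id s).div ((hasDerivAt_id s).mul_const u |>.const_add 1) h1.ne'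
        convert this using 1
        · rfl
        · rfl
        · rfl
        simp only [id]; ring
      have d2 : HasDerivAt (fun s : ℝ => 1/(u+s)) (-(1/(u+s)^2)) s := by
        have := ((hasDerivAt_id s).const_add u).inv h2.ne'
        simp only [id] at this
        simpa [one_div, neg_div, Pi.inv_def] using this
      have := ((d1.add d2)).const_mul (-Real.log u)
      convert this using 1
      · rfl
      · rfl
      rw [hW]; ring
    · -- interval integrability in s
      apply ContinuousOn.intervalIntegrable
      rw [Set.uIcc_of_le hab]
      intro s hs
      have hs0 : 0 < s := ha.trans_le hs.1
      have h1 : (1+s*u) ≠ 0 := by nlinarith [mul_pos hs0 hu0]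
      have h2 : (u+s) ≠ 0 := by nlinarith
      apply ContinuousAt.continuousWithinAt
      rw [hW]
      fun_prop (disch := first | exact pow_ne_zero 2 h1 | exact pow_ne_zero 2 h2)
  -- RHS of swap
  have hRHS : (∫ s in Set.Ioc a b, ∫ u in Set.Ioo (0:ℝ) 1, W u s)
      = (Real.log b)^2/2 - (Real.log a)^2/2 := by
    have h1 : ∀ s ∈ Set.Ioc a b, (∫ u in Set.Ioo (0:ℝ) 1, W u s) = Real.log s / s :=
      fun s hs => innerInt (ha.trans hs.1)
    rw [setIntegral_congr_fun measurableSet_Ioc h1, ← intervalIntegral.integral_of_le hab]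
    have hFTC := intervalIntegral.integral_eq_sub_of_hasDerivAt_of_le (a := a) (b := b)
      (f := fun s => (Real.log s)^2/2) (f' := fun s => Real.log s / s) hab ?_ ?_ ?_
    · rw [hFTC]
    · exact ((Real.continuousOn_log.mono (fun s hs => by
        simp only [Set.mem_compl_iff, Set.mem_singleton_iff]
        exact (ha.trans_le hs.1).ne')).pow 2).div_const 2
    · intro s hs
      have hs0 : 0 < s := ha.trans hs.1
      have := ((Real.hasDerivAt_log hs0.ne').pow 2).div_const 2
      convert this using 1
      · rfl
      · rfl
      norm_num
      field_simp
    · apply ContinuousOn.intervalIntegrable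
      rw [Set.uIcc_of_le hab]
      intro s hs
      have hs0 : 0 < s := ha.trans_le hs.1
      exact ((Real.continuousAt_log hs0.ne').div continuousAt_id hs0.ne').continuousWithinAt
  rw [hLHS, hRHS] at swap
  exact swap

lemma G1 : ∫ u in Set.Ioo (0:ℝ) 1, -Real.log u * ((1:ℝ)/(1+1*u) + 1/(u+1))
    = Real.pi ^ 2 / 6 := by
  have hpt : ∀ u ∈ Set.Ioo (0:ℝ) 1,
      -Real.log u * ((1:ℝ)/(1+1*u) + 1/(u+1)) = 2 * (-Real.log u / (1 + u)) := by
    intro u hu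
    rw [one_mul, add_comm u 1]
    ring
  rw [setIntegral_congr_fun measurableSet_Ioo hpt, MeasureTheory.integral_const_mul, M]
  ring

lemma Gval {a : ℝ} (ha : 0 < a) :
    ∫ u in Set.Ioo (0:ℝ) 1, -Real.log u * (a/(1+a*u) + 1/(u+a))
      = Real.pi ^ 2 / 6 + (Real.log a)^2/2 := by
  rcases le_or_gt 1 a with h | h
  · have := Gdiff one_pos h
    rw [G1] at this
    simp only [Real.log_one] at this
    linarith
  · have := Gdiff ha h.le
    rw [G1] at this
    simp only [Real.log_one] at this
    linarith

lemma intq1 {a : ℝ} (ha : 0 < a) :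
    IntegrableOn (fun u : ℝ => -Real.log u / ((1+a*u)*(1-u))) (Set.Ioo 0 1) := by
  refine intDom (fun u hu => ?_) 2 2 (fun u hu => ?_)
  · have h1 : (1+a*u)*(1-u) ≠ 0 := by
      have : (0:ℝ) < 1+a*u := by nlinarith [hu.1, mul_pos ha hu.1]
      have h2 : (0:ℝ) < 1-u := by nlinarith [hu.2]
      positivity
    exact ((Real.continuousAt_log hu.1.ne').neg).div (by fun_prop) h1
  · have hu0 := hu.1
    have h1 : (0:ℝ) < 1+a*u := by nlinarith [mul_pos ha hu0]
    have h2 : (0:ℝ) < 1-u := by nlinarith [hu.2]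
    have h3 : (1:ℝ) ≤ 1+a*u := by nlinarith [mul_pos ha hu0]
    rw [abs_of_nonneg (div_nonneg (Pnonneg hu) (by positivity))]
    have key : -Real.log u / ((1+a*u)*(1-u)) ≤ -Real.log u / (1-u) :=
      div_le_div_of_nonneg_left (Pnonneg hu) h2 (by nlinarith)
    exact key.trans (Pbound hu)

lemma intq2 {a : ℝ} (ha : 0 < a) :
    IntegrableOn (fun u : ℝ => -Real.log u / ((u+a)*(1-u))) (Set.Ioo 0 1) := by
  refine intDom (fun u hu => ?_) (2/a) (2/a) (fun u hu => ?_)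
  · have h1 : (u+a)*(1-u) ≠ 0 := by
      have : (0:ℝ) < u+a := by linarith [hu.1]
      have h2 : (0:ℝ) < 1-u := by nlinarith [hu.2]
      positivity
    exact ((Real.continuousAt_log hu.1.ne').neg).div (by fun_prop) h1
  · have hu0 := hu.1
    have h1 : (0:ℝ) < u+a := by linarith
    have h2 : (0:ℝ) < 1-u := by nlinarith [hu.2]
    rw [abs_of_nonneg (div_nonneg (Pnonneg hu) (by positivity))]
    have key : -Real.log u / ((u+a)*(1-u)) ≤ (1/a) * (-Real.log u / (1-u)) := by
      have k1 : -Real.log u / ((u+a)*(1-u)) ≤ -Real.log u / (a*(1-u)) :=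
        div_le_div_of_nonneg_left (Pnonneg hu) (by positivity) (by nlinarith)
      have k2 : -Real.log u / (a*(1-u)) = (1/a) * (-Real.log u / (1-u)) := by
        rw [mul_comm a (1-u), ← div_div]
        ring
      rw [← k2]
      exact k1
    have := Pbound hu
    calc -Real.log u / ((u+a)*(1-u)) ≤ (1/a) * (-Real.log u / (1-u)) := key
      _ ≤ (1/a) * (2 * (-Real.log u) + 2) := by
          apply mul_le_mul_of_nonneg_left this (by positivity)
      _ = 2/a * (-Real.log u) + 2/a := by ring

lemma Qsum {a : ℝ} (ha : 0 < a) :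
    (∫ u in Set.Ioo (0:ℝ) 1, -Real.log u / ((1+a*u)*(1-u)))
      + (∫ u in Set.Ioo (0:ℝ) 1, -Real.log u / ((u+a)*(1-u)))
      = (1/(1+a)) * (Real.pi^2/2 + (Real.log a)^2/2) := by
  rw [← integral_add (intq1 ha) (intq2 ha)]
  have hpt : ∀ u ∈ Set.Ioo (0:ℝ) 1,
      -Real.log u / ((1+a*u)*(1-u)) + -Real.log u / ((u+a)*(1-u))
        = (1/(1+a)) * (2 * (-Real.log u / (1-u)) + -Real.log u * (a/(1+a*u) + 1/(u+a))) := by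
    intro u hu
    have hu0 := hu.1
    have h1 : (0:ℝ) < 1+a*u := by nlinarith [mul_pos ha hu0]
    have h2 : (0:ℝ) < 1-u := by nlinarith [hu.2]
    have h3 : (0:ℝ) < u+a := by linarith
    have h4 : (0:ℝ) < 1+a := by linarith
    field_simp
    ring
  rw [setIntegral_congr_fun measurableSet_Ioo hpt, MeasureTheory.integral_const_mul,
    integral_add ((intK0.const_mul 2)) (intG ha), MeasureTheory.integral_const_mul, K0, Gval ha]
  ring

end ILRRS

/-- For `x > 0`, the function `t ↦ ln(t/x)/((1 + xt)(t − x))` on `(0, ∞)`, extended by its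
limiting value `1/(x(1 + x²))` at the removable singularity `t = x`, is Lebesgue
integrable on `(0, ∞)`, and its integral equals `(2/(1 + x²))((ln x)² + π²/4)`. -/
theorem integral_log_ratio_removable_singularity
    (x : ℝ) (hx : 0 < x) :
    IntegrableOn
        (fun t : ℝ => if t = x then 1 / (x * (1 + x ^ 2))
          else Real.log (t / x) / ((1 + x * t) * (t - x))) (Set.Ioi 0) ∧
      ∫ t in Set.Ioi (0 : ℝ),
          (if t = x then 1 / (x * (1 + x ^ 2))
            else Real.log (t / x) / ((1 + x * t) * (t - x))) =
        (2 / (1 + x ^ 2)) * ((Real.log x) ^ 2 + Real.pi ^ 2 / 4) := by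
  set g : ℝ → ℝ := fun t => Real.log (t / x) / ((1 + x * t) * (t - x)) with hg
  have ha : (0:ℝ) < x ^ 2 := by positivity
  -- image facts
  have himg1 : (fun u : ℝ => x * u) '' Set.Ioo 0 1 = Set.Ioo 0 x := by
    rw [Set.image_mul_left_Ioo hx 0 1, mul_zero, mul_one]
  have himg2 : (fun u : ℝ => x / u) '' Set.Ioo 0 1 = Set.Ioi x := by
    ext t
    simp only [Set.mem_image, Set.mem_Ioo, Set.mem_Ioi]
    constructor
    · rintro ⟨u, ⟨hu0, hu1⟩, rfl⟩
      rw [lt_div_iff₀ hu0]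
      nlinarith
    · intro ht
      have ht0 : 0 < t := hx.trans ht
      refine ⟨x / t, ⟨by positivity, ?_⟩, ?_⟩
      · rw [div_lt_one ht0]; exact ht
      · field_simp
  have hd1 : ∀ u ∈ Set.Ioo (0:ℝ) 1, HasDerivWithinAt (fun u : ℝ => x * u) x (Set.Ioo 0 1) u := by
    intro u hu
    simpa using ((hasDerivAt_id u).const_mul x).hasDerivWithinAt
  have hd2 : ∀ u ∈ Set.Ioo (0:ℝ) 1,
      HasDerivWithinAt (fun u : ℝ => x / u) (-x/u^2) (Set.Ioo 0 1) u := by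
    intro u hu
    have := (hasDerivAt_const u x).div (hasDerivAt_id u) hu.1.ne'
    simp only [id] at this
    have h2 : (0 * u - x * 1) / u ^ 2 = -x/u^2 := by ring
    rw [h2] at this
    exact this.hasDerivWithinAt
  have hinj1 : Set.InjOn (fun u : ℝ => x * u) (Set.Ioo 0 1) := fun p _ q _ h =>
    mul_left_cancel₀ hx.ne' h
  have hinj2 : Set.InjOn (fun u : ℝ => x / u) (Set.Ioo 0 1) := by
    intro p hp q hq h
    field_simp [hp.1.ne', hq.1.ne'] at h
    exact h.symm
  have heq1 : ∀ u ∈ Set.Ioo (0:ℝ) 1,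
      |x| • g (x * u) = -Real.log u / ((1+x^2*u)*(1-u)) := by
    intro u hu
    have hu0 := hu.1
    have hu1 := hu.2
    rw [hg]
    simp only [smul_eq_mul]
    have e0 : x * u / x = u := by
      rw [mul_comm, mul_div_assoc, div_self hx.ne', mul_one]
    rw [e0, abs_of_pos hx]
    have h1 : (1:ℝ) + x*(x*u) ≠ 0 := by nlinarith
    have h2 : x*u - x ≠ 0 := by
      intro h
      have : x * (u - 1) = 0 := by linarith [sub_eq_zero.1 h]
      rcases mul_eq_zero.1 this with h' | h'
      · exact hx.ne' h'
      · nlinarith [sub_eq_zero.1 h']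
    have h3 : (1:ℝ) - u ≠ 0 := by intro h; nlinarith [sub_eq_zero.1 h]
    have h4 : (1:ℝ) + x^2*u ≠ 0 := by nlinarith
    field_simp
    have h5 : (-1:ℝ) + u ≠ 0 := by intro h; linarith
    have h6 : (-1+u)⁻¹ * (-1+u) = (1:ℝ) := inv_mul_cancel₀ h5
    linear_combination (-Real.log u) * h6
  have heq2 : ∀ u ∈ Set.Ioo (0:ℝ) 1,
      |(-x/u^2)| • g (x / u) = -Real.log u / ((u+x^2)*(1-u)) := by
    intro u hu
    have hu0 := hu.1
    have hu1 := hu.2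
    rw [hg]
    simp only [smul_eq_mul]
    have habs : |(-x/u^2)| = x/u^2 := by
      rw [abs_div, abs_neg, abs_of_pos hx, abs_of_pos (pow_pos hu0 2)]
    rw [habs]
    have hlog : Real.log (x / u / x) = -Real.log u := by
      rw [show x / u / x = u⁻¹ by rw [div_div, mul_comm, ← div_div, div_self hx.ne', one_div],
        Real.log_inv]
    rw [hlog]
    have h1 : (1:ℝ) + x*(x/u) ≠ 0 := by positivity
    have h2 : x/u - x = x*(1-u)/u := by field_simp
    have h3 : (1:ℝ) - u ≠ 0 := by intro h; nlinarith [sub_eq_zero.1 h]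
    have h4 : u + x^2 ≠ 0 := by positivity
    rw [h2]
    field_simp
  -- integrability on pieces
  have hint1 : IntegrableOn g (Set.Ioo 0 x) := by
    rw [← himg1,
      integrableOn_image_iff_integrableOn_abs_deriv_smul measurableSet_Ioo hd1 hinj1]
    exact (integrableOn_congr_fun heq1 measurableSet_Ioo).2 (ILRRS.intq1 ha)
  have hint2 : IntegrableOn g (Set.Ioi x) := by
    rw [← himg2,
      integrableOn_image_iff_integrableOn_abs_deriv_smul measurableSet_Ioo hd2 hinj2]
    exact (integrableOn_congr_fun heq2 measurableSet_Ioo).2 (ILRRS.intq2 ha)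
  have hval1 : ∫ t in Set.Ioo 0 x, g t
      = ∫ u in Set.Ioo (0:ℝ) 1, -Real.log u / ((1+x^2*u)*(1-u)) := by
    rw [← himg1, integral_image_eq_integral_abs_deriv_smul measurableSet_Ioo hd1 hinj1]
    exact setIntegral_congr_fun measurableSet_Ioo heq1
  have hval2 : ∫ t in Set.Ioi x, g t
      = ∫ u in Set.Ioo (0:ℝ) 1, -Real.log u / ((u+x^2)*(1-u)) := by
    rw [← himg2, integral_image_eq_integral_abs_deriv_smul measurableSet_Ioo hd2 hinj2]
    exact setIntegral_congr_fun measurableSet_Ioo heq2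
  -- gluing
  have hsplit : Set.Ioi (0:ℝ) = Set.Ioc 0 x ∪ Set.Ioi x := (Set.Ioc_union_Ioi_eq_Ioi hx.le).symm
  have hdisj : Disjoint (Set.Ioc (0:ℝ) x) (Set.Ioi x) := Set.Ioc_disjoint_Ioi le_rfl
  have hintIoc : IntegrableOn g (Set.Ioc 0 x) :=
    (integrableOn_Ioc_iff_integrableOn_Ioo).2 hint1
  have hintg : IntegrableOn g (Set.Ioi 0) := by
    rw [hsplit]
    exact hintIoc.union hint2
  have hae : (fun t : ℝ => if t = x then 1 / (x * (1 + x ^ 2))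
      else Real.log (t / x) / ((1 + x * t) * (t - x)))
      =ᵐ[volume.restrict (Set.Ioi 0)] g := by
    have hne : ∀ᵐ t ∂(volume.restrict (Set.Ioi 0)), t ≠ x := by
      refine ae_restrict_of_ae ?_
      rw [ae_iff]
      have : {t : ℝ | ¬ t ≠ x} = {x} := by ext t; simp
      rw [this]
      exact measure_singleton x
    filter_upwards [hne] with t ht
    rw [if_neg ht, hg]
  constructor
  · exact (hintg.congr hae.symm : _)
  · rw [integral_congr_ae hae, hsplit,
      setIntegral_union hdisj measurableSet_Ioi hintIoc hint2,
      integral_Ioc_eq_integral_Ioo, hval1, hval2, ILRRS.Qsum ha]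
    have hlog2 : Real.log (x^2) = 2 * Real.log x := by
      rw [Real.log_pow]; norm_num
    rw [hlog2]
    have h5 : (1:ℝ) + x^2 ≠ 0 := by positivity
    field_simp
    ring
end

section
/- There exists α₀ > 0 such that for every α ∈ (0, α₀) the triple integral I(α) = ∭_{(0,∞)³} x^{α−1} y^{α−1} z^{α−1} / ((1 + xy)(1 + xz)(1 + yz)) dx dy dz is finite, and the limit Q₀ = lim_{α→0⁺} α³ I(α) exists, is finite and is strictly positive. -/
open Real MeasureTheory Filter

/-- The triple-integral integrand
`F_α(x,y,z) = x^{α−1} y^{α−1} z^{α−1} / ((1+xy)(1+xz)(1+yz))`. -/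
noncomputable def tripleF (α : ℝ) (p : ℝ × ℝ × ℝ) : ℝ :=
  p.1 ^ (α - 1) * p.2.1 ^ (α - 1) * p.2.2 ^ (α - 1) /
    ((1 + p.1 * p.2.1) * (1 + p.1 * p.2.2) * (1 + p.2.1 * p.2.2))

/-- The triple integral `I(α) = ∭_{(0,∞)³} F_α`. -/
noncomputable def tripleI (α : ℝ) : ℝ :=
  ∫ p in Set.Ioi (0 : ℝ) ×ˢ Set.Ioi (0 : ℝ) ×ˢ Set.Ioi (0 : ℝ), tripleF α p

section Aux

open Set

noncomputable def oneF (s t : ℝ) : ℝ := t ^ (s - 1) / (1 + t)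

noncomputable def oneI (s : ℝ) : ℝ := ∫ t in Set.Ioi (0:ℝ), oneF s t

lemma oneF_contOn (s : ℝ) : ContinuousOn (oneF s) (Set.Ioi 0) := by
  apply ContinuousOn.div
  · exact fun t ht => (Real.continuousAt_rpow_const t _ (Or.inl (ne_of_gt ht))).continuousWithinAt
  · exact (continuous_const.add continuous_id).continuousOn
  · intro t ht; have : (0:ℝ) < t := ht; positivity

lemma oneF_nonneg {s t : ℝ} (ht : 0 < t) : 0 ≤ oneF s t := by
  unfold oneF; positivity

lemma meas_oneF (s : ℝ) {u : Set ℝ} (hu : MeasurableSet u) (h : u ⊆ Set.Ioi 0) :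
    AEStronglyMeasurable (oneF s) (volume.restrict u) :=
  ((oneF_contOn s).mono h).aestronglyMeasurable hu

lemma integrableOn_rpow_Ioc {r : ℝ} (hr : -1 < r) :
    IntegrableOn (fun t : ℝ => t ^ r) (Set.Ioc 0 1) := by
  have := (intervalIntegral.intervalIntegrable_rpow' (a := 0) (b := 1) (r := r) hr)
  rwa [intervalIntegrable_iff_integrableOn_Ioc_of_le zero_le_one] at this

lemma integrableOn_oneF_Ioc {s : ℝ} (hs : 0 < s) : IntegrableOn (oneF s) (Set.Ioc 0 1) := by
  refine Integrable.mono (integrableOn_rpow_Ioc (r := s - 1) (by linarith))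
    (meas_oneF s measurableSet_Ioc (fun t ht => ht.1)) ?_
  filter_upwards [ae_restrict_mem measurableSet_Ioc] with t ht
  rw [Real.norm_eq_abs, Real.norm_eq_abs, abs_of_nonneg (oneF_nonneg ht.1),
    abs_of_nonneg (Real.rpow_nonneg ht.1.le _)]
  unfold oneF
  have h1 : (0:ℝ) < 1 + t := by linarith [ht.1]
  calc t ^ (s-1) / (1 + t) ≤ t ^ (s-1) / 1 := by
        apply div_le_div_of_nonneg_left (Real.rpow_nonneg ht.1.le _) one_pos; linarith [ht.1]
    _ = t ^ (s-1) := div_one _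

lemma oneF_le_Ioi {s t : ℝ} (ht : t ∈ Set.Ioi (1:ℝ)) : oneF s t ≤ t ^ (s - 2) := by
  have ht1 : (0:ℝ) < t := lt_trans one_pos ht
  have : t ^ (s - 2) = t ^ (s-1) / t := by
    rw [show s - 2 = (s-1) - 1 by ring, Real.rpow_sub ht1, Real.rpow_one]
  rw [this]
  unfold oneF
  apply div_le_div_of_nonneg_left (Real.rpow_nonneg ht1.le _) ht1
  linarith

lemma integrableOn_oneF_Ioi {s : ℝ} (hs : s < 1) : IntegrableOn (oneF s) (Set.Ioi 1) := by
  refine Integrable.mono (integrableOn_Ioi_rpow_of_lt (by linarith : s - 2 < -1) one_pos)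
    (meas_oneF s measurableSet_Ioi (fun t ht => Set.mem_Ioi.2 (lt_trans one_pos (Set.mem_Ioi.1 ht)))) ?_
  filter_upwards [ae_restrict_mem measurableSet_Ioi] with t ht
  have ht1 : (0:ℝ) < t := lt_trans one_pos ht
  rw [Real.norm_eq_abs, Real.norm_eq_abs, abs_of_nonneg (oneF_nonneg ht1),
    abs_of_nonneg (Real.rpow_nonneg ht1.le _)]
  exact oneF_le_Ioi ht

lemma integrableOn_oneF {s : ℝ} (hs : s ∈ Set.Ioo (0:ℝ) 1) :
    IntegrableOn (oneF s) (Set.Ioi 0) := by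
  rw [← Set.Ioc_union_Ioi_eq_Ioi (zero_le_one)]
  exact (integrableOn_oneF_Ioc hs.1).union (integrableOn_oneF_Ioi hs.2)

lemma integral_Ioc_rpow {s : ℝ} (hs : 0 < s) :
    ∫ t in Set.Ioc (0:ℝ) 1, t ^ (s - 1) = 1 / s := by
  rw [← intervalIntegral.integral_of_le zero_le_one,
    integral_rpow (Or.inl (by linarith : (-1:ℝ) < s - 1))]
  rw [show s - 1 + 1 = s by ring, Real.one_rpow, Real.zero_rpow (ne_of_gt hs)]
  ring

lemma integral_Ioi1_rpow {s : ℝ} (hs : s < 1) :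
    ∫ t in Set.Ioi (1:ℝ), t ^ (s - 2) = 1 / (1 - s) := by
  rw [integral_Ioi_rpow_of_lt (by linarith : s - 2 < -1) one_pos]
  rw [Real.one_rpow]
  rw [div_eq_div_iff (by linarith) (by linarith)]
  ring

lemma tendsto_s_oneI : Tendsto (fun s => s * oneI s) (nhdsWithin 0 (Set.Ioi 0)) (nhds 1) := by
  set A : ℝ → ℝ := fun s => ∫ t in Set.Ioc (0:ℝ) 1, t ^ s / (1 + t) with hA
  set B : ℝ → ℝ := fun s => ∫ t in Set.Ioi (1:ℝ), oneF s t with hB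
  have hAint : ∀ s : ℝ, 0 < s → IntegrableOn (fun t : ℝ => t ^ s / (1 + t)) (Set.Ioc 0 1) := by
    intro s hs
    have := integrableOn_oneF_Ioc (s := s + 1) (by linarith)
    unfold oneF at this
    simpa only [add_sub_cancel_right] using this
  have hev : ∀ᶠ s in nhdsWithin (0:ℝ) (Set.Ioi 0), s ∈ Set.Ioo (0:ℝ) (1/2) :=
    Ioo_mem_nhdsGT_of_mem ⟨le_refl 0, by norm_num⟩
  have heq : ∀ s ∈ Set.Ioo (0:ℝ) (1/2),
      s * oneI s = 1 - s * A s + s * B s := by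
    intro s hs
    have hs0 := hs.1
    have hs1 : s < 1 := by linarith [hs.2]
    have hsplit : oneI s = (∫ t in Set.Ioc (0:ℝ) 1, oneF s t) + B s := by
      rw [oneI, ← Set.Ioc_union_Ioi_eq_Ioi (zero_le_one (α := ℝ))]
      exact setIntegral_union (Set.Ioc_disjoint_Ioi le_rfl) measurableSet_Ioi
        (integrableOn_oneF_Ioc hs0) (integrableOn_oneF_Ioi hs1)
    have hIoc : (∫ t in Set.Ioc (0:ℝ) 1, oneF s t) = 1 / s - A s := by
      have h1 : ∀ t ∈ Set.Ioc (0:ℝ) 1, oneF s t = t ^ (s - 1) - t ^ s / (1 + t) := by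
        intro t ht
        have ht0 := ht.1
        have hts : t ^ s = t ^ (s - 1) * t := by
          rw [Real.rpow_sub ht0, Real.rpow_one]; field_simp
        unfold oneF
        rw [hts]
        have h1t : (0:ℝ) < 1 + t := by linarith
        field_simp
        ring
      rw [setIntegral_congr_fun measurableSet_Ioc h1,
        integral_sub (integrableOn_rpow_Ioc (by linarith)) (hAint s hs0),
        integral_Ioc_rpow hs0]
    rw [hsplit, hIoc]
    field_simp
  have hAbd : ∀ s ∈ Set.Ioo (0:ℝ) (1/2), A s ≤ 1 := by
    intro s hs
    have : A s ≤ ∫ _t in Set.Ioc (0:ℝ) 1, (1:ℝ) := by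
      apply setIntegral_mono_on (hAint s hs.1) (integrableOn_const (by simp))
        measurableSet_Ioc
      intro t ht
      have h1t : (1:ℝ) ≤ 1 + t := by linarith [ht.1]
      have hts : t ^ s ≤ 1 := Real.rpow_le_one ht.1.le ht.2 hs.1.le
      calc t ^ s / (1 + t) ≤ t ^ s / 1 :=
            div_le_div_of_nonneg_left (Real.rpow_nonneg ht.1.le _) one_pos h1t
        _ = t ^ s := div_one _
        _ ≤ 1 := hts
    simpa using this
  have hAnn : ∀ s ∈ Set.Ioo (0:ℝ) (1/2), 0 ≤ A s := by
    intro s hs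
    apply setIntegral_nonneg measurableSet_Ioc
    intro t ht
    have := ht.1
    positivity
  have hBbd : ∀ s ∈ Set.Ioo (0:ℝ) (1/2), B s ≤ 1 / (1 - s) := by
    intro s hs
    have hs1 : s < 1 := by linarith [hs.2]
    have : B s ≤ ∫ t in Set.Ioi (1:ℝ), t ^ (s - 2) := by
      apply setIntegral_mono_on (integrableOn_oneF_Ioi hs1)
        (integrableOn_Ioi_rpow_of_lt (by linarith) one_pos) measurableSet_Ioi
      exact fun t ht => oneF_le_Ioi ht
    rwa [integral_Ioi1_rpow hs1] at this
  have hBnn : ∀ s ∈ Set.Ioo (0:ℝ) (1/2), 0 ≤ B s := by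
    intro s hs
    apply setIntegral_nonneg measurableSet_Ioi
    intro t ht
    exact oneF_nonneg (lt_trans one_pos ht)
  have htA : Tendsto (fun s => s * A s) (nhdsWithin 0 (Set.Ioi 0)) (nhds 0) := by
    apply squeeze_zero' (by filter_upwards [hev] with s hs; exact mul_nonneg hs.1.le (hAnn s hs))
      (g := fun s => s)
    · filter_upwards [hev] with s hs
      calc s * A s ≤ s * 1 := mul_le_mul_of_nonneg_left (hAbd s hs) hs.1.le
        _ = s := mul_one s
    · exact tendsto_id.mono_left nhdsWithin_le_nhds
  have htB : Tendsto (fun s => s * B s) (nhdsWithin 0 (Set.Ioi 0)) (nhds 0) := by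
    apply squeeze_zero' (by filter_upwards [hev] with s hs; exact mul_nonneg hs.1.le (hBnn s hs))
      (g := fun s => s * (1 / (1 - s)))
    · filter_upwards [hev] with s hs
      exact mul_le_mul_of_nonneg_left (hBbd s hs) hs.1.le
    · have : Tendsto (fun s : ℝ => s * (1 / (1 - s))) (nhds 0) (nhds (0 * (1 / (1 - 0)))) := by
        apply Tendsto.mul tendsto_id
        apply Tendsto.div tendsto_const_nhds (tendsto_const_nhds.sub tendsto_id) (by norm_num)
      simpa using this.mono_left nhdsWithin_le_nhds
  have : Tendsto (fun s => 1 - s * A s + s * B s) (nhdsWithin 0 (Set.Ioi 0)) (nhds 1) := by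
    have := (tendsto_const_nhds (x := (1:ℝ)).sub htA).add htB
    simpa using this
  apply this.congr'
  filter_upwards [hev] with s hs
  exact (heq s hs).symm


noncomputable def pr1 : (ℝ × ℝ × ℝ) →L[ℝ] ℝ := ContinuousLinearMap.fst ℝ ℝ (ℝ × ℝ)
noncomputable def pr2 : (ℝ × ℝ × ℝ) →L[ℝ] ℝ :=
  (ContinuousLinearMap.fst ℝ ℝ ℝ).comp (ContinuousLinearMap.snd ℝ ℝ (ℝ × ℝ))
noncomputable def pr3 : (ℝ × ℝ × ℝ) →L[ℝ] ℝ :=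
  (ContinuousLinearMap.snd ℝ ℝ ℝ).comp (ContinuousLinearMap.snd ℝ ℝ (ℝ × ℝ))

def Phi (p : ℝ × ℝ × ℝ) : ℝ × ℝ × ℝ := (p.1 * p.2.1, p.1 * p.2.2, p.2.1 * p.2.2)

noncomputable def PhiD (p : ℝ × ℝ × ℝ) : (ℝ × ℝ × ℝ) →L[ℝ] (ℝ × ℝ × ℝ) :=
  (p.1 • pr2 + p.2.1 • pr1).prod ((p.1 • pr3 + p.2.2 • pr1).prod (p.2.1 • pr3 + p.2.2 • pr2))

lemma hasFDerivAt_Phi (p : ℝ × ℝ × ℝ) : HasFDerivAt Phi (PhiD p) p := by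
  have h1 : HasFDerivAt (fun q : ℝ × ℝ × ℝ => q.1) pr1 p := hasFDerivAt_fst
  have h2 : HasFDerivAt (fun q : ℝ × ℝ × ℝ => q.2.1) pr2 p :=
    hasFDerivAt_fst.comp p hasFDerivAt_snd
  have h3 : HasFDerivAt (fun q : ℝ × ℝ × ℝ => q.2.2) pr3 p :=
    hasFDerivAt_snd.comp p hasFDerivAt_snd
  exact HasFDerivAt.prodMk (h1.mul h2) (HasFDerivAt.prodMk (h1.mul h3) (h2.mul h3))

noncomputable def e3 : (ℝ × ℝ × ℝ) ≃ₗ[ℝ] (Fin 3 → ℝ) where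
  toFun p := ![p.1, p.2.1, p.2.2]
  invFun v := (v 0, v 1, v 2)
  map_add' p q := by funext i; fin_cases i <;> simp
  map_smul' c p := by funext i; fin_cases i <;> simp
  left_inv p := by simp
  right_inv v := by funext i; fin_cases i <;> simp

lemma PhiD_det (p : ℝ × ℝ × ℝ) :
    (PhiD p).det = -(2 * (p.1 * (p.2.1 * p.2.2))) := by
  have h := LinearMap.det_conj ((PhiD p) : (ℝ × ℝ × ℝ) →ₗ[ℝ] (ℝ × ℝ × ℝ)) e3
  rw [ContinuousLinearMap.det, ← h, ← LinearMap.det_toMatrix' ]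
  rw [Matrix.det_fin_three]
  simp [LinearMap.toMatrix'_apply, e3, PhiD, pr1, pr2, pr3, Matrix.cons_val_zero,
    Matrix.cons_val_one, Pi.single_apply]
  ring

def posOct : Set (ℝ × ℝ × ℝ) := Set.Ioi 0 ×ˢ Set.Ioi 0 ×ˢ Set.Ioi 0

lemma measurableSet_posOct : MeasurableSet posOct :=
  measurableSet_Ioi.prod (measurableSet_Ioi.prod measurableSet_Ioi)

lemma injOn_Phi : Set.InjOn Phi posOct := by
  rintro ⟨x, y, z⟩ ⟨hx, hy, hz⟩ ⟨X, Y, Z⟩ ⟨hX, hY, hZ⟩ h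
  simp only [Phi, Prod.mk.injEq] at h
  obtain ⟨h1, h2, h3⟩ := h
  simp only [Set.mem_Ioi] at hx hy hz hX hY hZ
  have hxX : x = X := by
    have key : x ^ 2 * (y * z) = X ^ 2 * (y * z) := by
      have h12 : (x * y) * (x * z) = (X * Y) * (X * Z) := by rw [h1, h2]
      calc x ^ 2 * (y * z) = (x * y) * (x * z) := by ring
        _ = (X * Y) * (X * Z) := h12
        _ = X ^ 2 * (Y * Z) := by ring
        _ = X ^ 2 * (y * z) := by rw [← h3]
    have hsq : x ^ 2 = X ^ 2 := mul_right_cancel₀ (ne_of_gt (mul_pos hy hz)) key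
    have hfac : (x - X) * (x + X) = 0 := by
      have : (x - X) * (x + X) = x ^ 2 - X ^ 2 := by ring
      rw [this, hsq, sub_self]
    rcases mul_eq_zero.1 hfac with h | h
    · linarith
    · linarith
  subst hxX
  have hyY : y = Y := by
    have := mul_left_cancel₀ (ne_of_gt hx) h1; exact this
  have hzZ : z = Z := mul_left_cancel₀ (ne_of_gt hx) h2
  simp [hyY, hzZ]

lemma image_Phi : Phi '' posOct = posOct := by
  apply Set.Subset.antisymm
  · rintro q ⟨⟨x, y, z⟩, ⟨hx, hy, hz⟩, rfl⟩
    simp only [Set.mem_Ioi] at hx hy hz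
    exact ⟨mul_pos hx hy, mul_pos hx hz, mul_pos hy hz⟩
  · rintro ⟨u, v, w⟩ ⟨hu, hv, hw⟩
    simp only [Set.mem_Ioi] at hu hv hw
    refine ⟨(Real.sqrt (u * v / w), Real.sqrt (u * w / v), Real.sqrt (v * w / u)), ?_, ?_⟩
    · exact ⟨Real.sqrt_pos.2 (by positivity), Real.sqrt_pos.2 (by positivity),
        Real.sqrt_pos.2 (by positivity)⟩
    · simp only [Phi, Prod.mk.injEq]
      refine ⟨?_, ?_, ?_⟩
      · rw [← Real.sqrt_mul (by positivity), show u * v / w * (u * w / v) = u ^ 2 by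
          field_simp, Real.sqrt_sq hu.le]
      · rw [← Real.sqrt_mul (by positivity), show u * v / w * (v * w / u) = v ^ 2 by
          field_simp, Real.sqrt_sq hv.le]
      · rw [← Real.sqrt_mul (by positivity), show u * w / v * (v * w / u) = w ^ 2 by
          field_simp, Real.sqrt_sq hw.le]

noncomputable def g3 (s : ℝ) (q : ℝ × ℝ × ℝ) : ℝ :=
  oneF s q.1 * (oneF s q.2.1 * oneF s q.2.2)

lemma restrict_eq_prod :
    (volume : Measure (ℝ × ℝ × ℝ)).restrict posOct =
      (volume.restrict (Set.Ioi 0)).prod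
        ((volume.restrict (Set.Ioi 0)).prod (volume.restrict (Set.Ioi 0))) := by
  rw [Measure.prod_restrict, Measure.prod_restrict, ← Measure.volume_eq_prod,
    ← Measure.volume_eq_prod]
  rfl

lemma integrableOn_g3 {s : ℝ} (h : IntegrableOn (oneF s) (Set.Ioi 0)) :
    IntegrableOn (g3 s) posOct := by
  rw [IntegrableOn, restrict_eq_prod]
  exact h.mul_prod (h.mul_prod h)

lemma integral_g3 (s : ℝ) :
    ∫ q in posOct, g3 s q = oneI s * (oneI s * oneI s) := by
  have h0 : (∫ q in posOct, g3 s q) =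
      ∫ q, oneF s q.1 * ((fun r : ℝ × ℝ => oneF s r.1 * oneF s r.2) q.2)
        ∂((volume.restrict (Set.Ioi 0)).prod
          ((volume.restrict (Set.Ioi 0)).prod (volume.restrict (Set.Ioi 0)))) := by
    rw [← restrict_eq_prod]; rfl
  rw [h0, integral_prod_mul (L := ℝ) (oneF s) (fun r : ℝ × ℝ => oneF s r.1 * oneF s r.2),
    integral_prod_mul (L := ℝ) (oneF s) (oneF s)]
  rfl

instance : Measure.IsAddHaarMeasure (volume : Measure (ℝ × ℝ × ℝ)) :=
  Measure.prod.instIsAddHaarMeasure _ _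

lemma pointwise_id {α : ℝ} {p : ℝ × ℝ × ℝ} (hp : p ∈ posOct) :
    |(PhiD p).det| • g3 (α / 2) (Phi p) = 2 * tripleF α p := by
  obtain ⟨x, y, z⟩ := p
  obtain ⟨hx, hy, hz⟩ := hp
  simp only [Set.mem_Ioi] at hx hy hz
  rw [PhiD_det]
  have habs : |-(2 * (x * (y * z)))| = 2 * (x * (y * z)) := by
    rw [abs_neg, abs_of_pos (by positivity)]
  rw [habs, smul_eq_mul]
  simp only [g3, oneF, Phi, tripleF]
  rw [Real.mul_rpow hx.le hy.le, Real.mul_rpow hx.le hz.le, Real.mul_rpow hy.le hz.le]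
  have key : ∀ t : ℝ, 0 < t → t ^ (α - 1) = t ^ (α / 2 - 1) * t ^ (α / 2 - 1) * t := by
    intro t ht
    rw [show t ^ (α / 2 - 1) * t ^ (α / 2 - 1) * t
        = t ^ (α / 2 - 1) * t ^ (α / 2 - 1) * t ^ (1:ℝ) by rw [Real.rpow_one],
      ← Real.rpow_add ht, ← Real.rpow_add ht]
    congr 1
    ring
  rw [key x hx, key y hy, key z hz]
  have d1 : (1:ℝ) + x * y ≠ 0 := by positivity
  have d2 : (1:ℝ) + x * z ≠ 0 := by positivity
  have d3 : (1:ℝ) + y * z ≠ 0 := by positivity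
  field_simp

lemma cov_main {α : ℝ} (hα : α ∈ Set.Ioo (0:ℝ) 1)
    (hone : IntegrableOn (oneF (α/2)) (Set.Ioi 0)) :
    IntegrableOn (tripleF α) posOct ∧
      tripleI α = oneI (α/2) * (oneI (α/2) * oneI (α/2)) / 2 := by
  have hder : ∀ p ∈ posOct, HasFDerivWithinAt Phi (PhiD p) posOct p :=
    fun p _ => (hasFDerivAt_Phi p).hasFDerivWithinAt
  have hiff := integrableOn_image_iff_integrableOn_abs_det_fderiv_smul volume
    measurableSet_posOct hder injOn_Phi (g3 (α/2))
  rw [image_Phi] at hiff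
  have hint2 : IntegrableOn (fun p => |(PhiD p).det| • g3 (α/2) (Phi p)) posOct :=
    hiff.1 (integrableOn_g3 hone)
  have heq : Set.EqOn (fun p => |(PhiD p).det| • g3 (α/2) (Phi p))
      (fun p => 2 * tripleF α p) posOct := fun p hp => pointwise_id hp
  have hint3 : IntegrableOn (fun p => 2 * tripleF α p) posOct :=
    hint2.congr_fun heq measurableSet_posOct
  have hint : IntegrableOn (tripleF α) posOct := by
    have h4 : IntegrableOn (fun p => (2:ℝ)⁻¹ * (2 * tripleF α p)) posOct :=
      hint3.const_mul (2⁻¹ : ℝ)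
    refine h4.congr_fun (fun p hp => ?_) measurableSet_posOct
    show (2:ℝ)⁻¹ * (2 * tripleF α p) = tripleF α p
    ring
  refine ⟨hint, ?_⟩
  have hval := integral_image_eq_integral_abs_det_fderiv_smul volume
    measurableSet_posOct hder injOn_Phi (g3 (α/2))
  rw [image_Phi, integral_g3, setIntegral_congr_fun measurableSet_posOct heq,
    integral_const_mul] at hval
  have hI : tripleI α = ∫ p in posOct, tripleF α p := rfl
  rw [hI]
  linarith [hval]


lemma tendsto_half : Tendsto (fun α : ℝ => α / 2) (nhdsWithin 0 (Set.Ioi 0))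
    (nhdsWithin 0 (Set.Ioi 0)) := by
  apply tendsto_nhdsWithin_of_tendsto_nhds_of_eventually_within
  · have : Tendsto (fun α : ℝ => α / 2) (nhds 0) (nhds (0 / 2)) := tendsto_id.div_const 2
    simpa using this.mono_left nhdsWithin_le_nhds
  · filter_upwards [eventually_mem_nhdsWithin] with α (hα : α ∈ Set.Ioi (0:ℝ))
    exact show (0:ℝ) < α / 2 from half_pos (Set.mem_Ioi.1 hα)

end Aux

/-- There is `α₀ > 0` such that for `α ∈ (0, α₀)` the triple integral
`I(α) = ∭_{(0,∞)³} (xyz)^{α−1}/((1+xy)(1+xz)(1+yz))` is finite, and the limit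
`Q₀ = lim_{α→0⁺} α³ I(α)` exists, is finite and strictly positive. -/
theorem triple_integral_limit_exists :
    ∃ α₀ > (0 : ℝ),
      (∀ α ∈ Set.Ioo (0 : ℝ) α₀,
        IntegrableOn (tripleF α) (Set.Ioi (0 : ℝ) ×ˢ Set.Ioi (0 : ℝ) ×ˢ Set.Ioi (0 : ℝ))) ∧
      ∃ Q₀ : ℝ, 0 < Q₀ ∧
        Tendsto (fun α : ℝ => α ^ 3 * tripleI α) (nhdsWithin 0 (Set.Ioi 0)) (nhds Q₀) := by
  have hone : ∀ α ∈ Set.Ioo (0:ℝ) 1, IntegrableOn (oneF (α/2)) (Set.Ioi 0) :=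
    fun α hα => integrableOn_oneF ⟨half_pos hα.1, by linarith [hα.2]⟩
  refine ⟨1, one_pos, fun α hα => (cov_main hα (hone α hα)).1, 4, by norm_num, ?_⟩
  have h1 : Tendsto (fun α : ℝ => (α/2) * oneI (α/2)) (nhdsWithin 0 (Set.Ioi 0)) (nhds 1) :=
    tendsto_s_oneI.comp tendsto_half
  have h2 : Tendsto (fun α : ℝ => 4 * ((α/2) * oneI (α/2)) ^ 3)
      (nhdsWithin 0 (Set.Ioi 0)) (nhds (4 * 1 ^ 3)) :=
    tendsto_const_nhds.mul (h1.pow 3)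
  norm_num at h2
  apply h2.congr'
  filter_upwards [Ioo_mem_nhdsGT_of_mem ⟨le_refl (0:ℝ), one_pos⟩] with α hα
  rw [(cov_main hα (hone α hα)).2]
  ring
end

section
/- For every real α ∈ (0, 1) and every real c > 0, the sequence k ↦ k^{α+1} · (∫_c^∞ t^{k−α−1} e^{−t} dt) / k!, indexed by k ∈ ℕ with k ≥ 1, tends to 1 as k → ∞. -/
open Real MeasureTheory Filter

private lemma gamma_add_nat_aux {s : ℝ} (hs : 0 < s) (n : ℕ) :
    Real.Gamma (s + n) = Real.Gamma s * ∏ j ∈ Finset.range n, (s + j) := by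
  induction n with
  | zero => simp
  | succ n ih =>
    have h1 : s + ((n : ℕ) + 1 : ℕ) = (s + n) + 1 := by push_cast; ring
    have h2 : (0:ℝ) < s + n := by positivity
    rw [h1, Real.Gamma_add_one h2.ne', ih, Finset.prod_range_succ]
    ring

private lemma aux_sq_geom (c : ℝ) (hc : 0 < c) :
    Tendsto (fun n : ℕ => (n : ℝ) ^ 2 * c ^ n / (Nat.factorial n : ℝ)) atTop (nhds 0) := by
  have h1 : Tendsto (fun n : ℕ => (n : ℝ) ^ 2 * (1/2 : ℝ) ^ n) atTop (nhds 0) := by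
    have := summable_pow_mul_geometric_of_norm_lt_one (R := ℝ) 2 (r := (1/2 : ℝ)) (by norm_num)
    exact this.tendsto_atTop_zero
  have h2 : Tendsto (fun n : ℕ => (2*c) ^ n / (Nat.factorial n : ℝ)) atTop (nhds 0) :=
    FloorSemiring.tendsto_pow_div_factorial_atTop (2*c)
  have := h1.mul h2
  rw [zero_mul] at this
  refine this.congr fun n => ?_
  have hcc : (1/2 : ℝ) * (2*c) = c := by ring
  rw [mul_assoc, ← mul_div_assoc, ← mul_pow, hcc, mul_div_assoc]

private lemma gamma_ratio_tendsto {α : ℝ} (hα0 : 0 < α) (hα1 : α < 1) :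
    Tendsto (fun n : ℕ =>
      (n : ℝ) ^ (α + 1) * Real.Gamma ((n : ℝ) - α) / (Nat.factorial n : ℝ))
      atTop (nhds 1) := by
  have h1α : (0:ℝ) < 1 - α := by linarith
  have hΓpos := Real.Gamma_pos_of_pos h1α
  have hg : Tendsto (fun n : ℕ =>
      (n:ℝ) ^ (1-α) * (Nat.factorial n : ℝ) / Real.Gamma (1 - α + ((n:ℝ) + 1)))
      atTop (nhds 1) := by
    have h := (Real.GammaSeq_tendsto_Gamma (1-α)).div_const (Real.Gamma (1-α))
    rw [div_self hΓpos.ne'] at h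
    refine h.congr fun n => ?_
    have hp := gamma_add_nat_aux h1α (n+1)
    push_cast at hp
    rw [Real.GammaSeq, hp, div_div, mul_comm (Real.Gamma (1-α))]
  have hginv : Tendsto (fun n : ℕ =>
      Real.Gamma (1 - α + ((n:ℝ)+1)) / ((n:ℝ)^(1-α) * (Nat.factorial n : ℝ)))
      atTop (nhds 1) := by
    have h := hg.inv₀ one_ne_zero
    rw [inv_one] at h
    refine h.congr fun n => ?_
    rw [inv_div]
  have h2 : Tendsto (fun n : ℕ => (n:ℝ)/((n:ℝ) + (1 - α))) atTop (nhds 1) :=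
    tendsto_natCast_div_add_atTop (1-α)
  have h3 : Tendsto (fun n : ℕ => (n:ℝ)/((n:ℝ) + (-α))) atTop (nhds 1) :=
    tendsto_natCast_div_add_atTop (-α)
  have hmain := (h2.mul h3).mul hginv
  rw [mul_one, mul_one] at hmain
  refine hmain.congr' ?_
  filter_upwards [eventually_ge_atTop 1] with n hn
  have hn1 : (1:ℝ) ≤ (n:ℝ) := by exact_mod_cast hn
  have hnpos : (0:ℝ) < n := by linarith
  have hx : (0:ℝ) < (n:ℝ) - α := by linarith
  have hΓe : Real.Gamma (1 - α + ((n:ℝ)+1))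
      = ((n:ℝ) - α + 1) * (((n:ℝ) - α) * Real.Gamma ((n:ℝ) - α)) := by
    have e1 : 1 - α + ((n:ℝ)+1) = ((n:ℝ) - α + 1) + 1 := by ring
    rw [e1, Real.Gamma_add_one (by positivity : (0:ℝ) < (n:ℝ) - α + 1).ne',
      Real.Gamma_add_one hx.ne']
  have hrp : (n:ℝ)^(α+1) = (n:ℝ) * (n:ℝ) / (n:ℝ)^(1-α) := by
    rw [eq_div_iff (Real.rpow_pos_of_pos hnpos (1-α)).ne', ← Real.rpow_add hnpos]
    rw [show α + 1 + (1 - α) = ((2:ℕ):ℝ) by push_cast; ring, Real.rpow_natCast]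
    ring
  have d1 : (n:ℝ) + (1 - α) ≠ 0 := by linarith
  have d2 : (n:ℝ) + (-α) ≠ 0 := by linarith
  have d3 : (n:ℝ)^(1-α) ≠ 0 := (Real.rpow_pos_of_pos hnpos (1-α)).ne'
  have d4 : (Nat.factorial n : ℝ) ≠ 0 := Nat.cast_ne_zero.mpr (Nat.factorial_ne_zero n)
  rw [hΓe, hrp]
  field_simp
  ring

/-- For `α ∈ (0, 1)` and `c > 0`, the sequence
`k ↦ k^{α+1} · Γ(k − α, c) / k!`, where `Γ(s, x) = ∫_x^∞ t^{s−1} e^{−t} dt` is the upper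
incomplete gamma function, tends to `1` as `k → ∞`; i.e. the degree distribution
`P_k ∝ Γ(k − α, θ)/k!` decays as the power law `k^{−α−1}`. -/
theorem incGamma_powerlaw_asymptotics
    (α : ℝ) (hα : α ∈ Set.Ioo (0 : ℝ) 1) (c : ℝ) (hc : 0 < c) :
    Tendsto
      (fun k : ℕ =>
        (k : ℝ) ^ (α + 1) *
          (∫ t in Set.Ioi c, t ^ ((k : ℝ) - α - 1) * Real.exp (-t)) /
          (Nat.factorial k : ℝ))
      atTop (nhds 1) := by
  obtain ⟨hα0, hα1⟩ := hα
  have hA := gamma_ratio_tendsto hα0 hα1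
  -- upper bound sequence tends to 0
  have hW : Tendsto (fun n : ℕ => c ^ (-α) * ((n:ℝ)^2 * c ^ n / (Nat.factorial n : ℝ)))
      atTop (nhds 0) := by
    simpa using (aux_sq_geom c hc).const_mul (c ^ (-α))
  have hU : Tendsto (fun n : ℕ =>
      (n:ℝ) ^ (α+1) * c ^ ((n:ℝ) - α) / (Nat.factorial n : ℝ)) atTop (nhds 0) := by
    apply squeeze_zero' ?_ ?_ hW
    · filter_upwards with n
      positivity
    · filter_upwards [eventually_ge_atTop 1] with n hn
      have hn1 : (1:ℝ) ≤ (n:ℝ) := by exact_mod_cast hn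
      have e1 : c ^ ((n:ℝ) - α) = c ^ (n:ℕ) * c ^ (-α) := by
        rw [show (n:ℝ) - α = ((n:ℕ):ℝ) + (-α) by push_cast; ring, Real.rpow_add hc,
          Real.rpow_natCast]
      have e2 : (n:ℝ) ^ (α+1) ≤ (n:ℝ) ^ 2 := by
        have h := Real.rpow_le_rpow_of_exponent_le hn1
          (show α + 1 ≤ ((2:ℕ):ℝ) by push_cast; linarith)
        rwa [Real.rpow_natCast] at h
      calc (n:ℝ) ^ (α+1) * c ^ ((n:ℝ) - α) / (Nat.factorial n : ℝ)
          = c ^ (-α) * ((n:ℝ) ^ (α+1) * c ^ (n:ℕ) / (Nat.factorial n : ℝ)) := by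
            rw [e1]; ring
        _ ≤ c ^ (-α) * ((n:ℝ)^2 * c ^ n / (Nat.factorial n : ℝ)) := by gcongr
  -- lower incomplete part tends to 0
  have hB : Tendsto (fun n : ℕ =>
      (n:ℝ) ^ (α+1) * (∫ t in Set.Ioc 0 c, t ^ ((n:ℝ) - α - 1) * Real.exp (-t)) /
        (Nat.factorial n : ℝ)) atTop (nhds 0) := by
    apply squeeze_zero' ?_ ?_ hU
    · filter_upwards with n
      have hint : 0 ≤ ∫ t in Set.Ioc 0 c, t ^ ((n:ℝ) - α - 1) * Real.exp (-t) := by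
        apply setIntegral_nonneg measurableSet_Ioc
        intro t ht
        have := ht.1
        positivity
      positivity
    · filter_upwards [eventually_ge_atTop 2] with n hn
      have hn2 : (2:ℝ) ≤ (n:ℝ) := by exact_mod_cast hn
      have hs : (0:ℝ) < (n:ℝ) - α := by linarith
      have hexp : (0:ℝ) ≤ (n:ℝ) - α - 1 := by linarith
      have hint : IntegrableOn (fun t : ℝ => t ^ ((n:ℝ) - α - 1) * Real.exp (-t))
          (Set.Ioc 0 c) := by
        have h := (Real.GammaIntegral_convergent hs).mono_set (Set.Ioc_subset_Ioi_self : Set.Ioc 0 c ⊆ Set.Ioi 0)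
        exact h.congr_fun (fun t _ => mul_comm _ _) measurableSet_Ioc
      have hconst : IntegrableOn (fun _ : ℝ => c ^ ((n:ℝ) - α - 1)) (Set.Ioc 0 c) :=
        integrableOn_const measure_Ioc_lt_top.ne
      have hmono := setIntegral_mono_on hint hconst measurableSet_Ioc (fun t ht => by
        have h1 : t ^ ((n:ℝ) - α - 1) ≤ c ^ ((n:ℝ) - α - 1) :=
          Real.rpow_le_rpow ht.1.le ht.2 hexp
        have h2 : Real.exp (-t) ≤ 1 := Real.exp_le_one_iff.mpr (by linarith [ht.1])
        calc t ^ ((n:ℝ) - α - 1) * Real.exp (-t)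
            ≤ c ^ ((n:ℝ) - α - 1) * 1 :=
              mul_le_mul h1 h2 (Real.exp_pos _).le (by positivity)
          _ = c ^ ((n:ℝ) - α - 1) := mul_one _)
      have hconstval : (∫ _ in Set.Ioc 0 c, c ^ ((n:ℝ) - α - 1)) = c ^ ((n:ℝ) - α) := by
        rw [setIntegral_const, Real.volume_real_Ioc_of_le hc.le, smul_eq_mul, sub_zero,
          mul_comm, ← Real.rpow_add_one hc.ne']
        ring_nf
      have hJ : (∫ t in Set.Ioc 0 c, t ^ ((n:ℝ) - α - 1) * Real.exp (-t)) ≤ c ^ ((n:ℝ) - α) := by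
        rw [← hconstval]; exact hmono
      gcongr
  -- assemble
  have hsum := hA.sub hB
  rw [sub_zero] at hsum
  refine hsum.congr' ?_
  filter_upwards [eventually_ge_atTop 1] with n hn
  have hn1 : (1:ℝ) ≤ (n:ℝ) := by exact_mod_cast hn
  have hs : (0:ℝ) < (n:ℝ) - α := by linarith
  have hi1 : IntegrableOn (fun t : ℝ => t ^ ((n:ℝ) - α - 1) * Real.exp (-t)) (Set.Ioc 0 c) := by
    have h := (Real.GammaIntegral_convergent hs).mono_set (Set.Ioc_subset_Ioi_self : Set.Ioc 0 c ⊆ Set.Ioi 0)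
    exact h.congr_fun (fun t _ => mul_comm _ _) measurableSet_Ioc
  have hi2 : IntegrableOn (fun t : ℝ => t ^ ((n:ℝ) - α - 1) * Real.exp (-t)) (Set.Ioi c) := by
    have h := (Real.GammaIntegral_convergent hs).mono_set
      (Set.Ioi_subset_Ioi hc.le)
    exact h.congr_fun (fun t _ => mul_comm _ _) measurableSet_Ioi
  have hsplit : Real.Gamma ((n:ℝ) - α)
      = (∫ t in Set.Ioc 0 c, t ^ ((n:ℝ) - α - 1) * Real.exp (-t))
        + ∫ t in Set.Ioi c, t ^ ((n:ℝ) - α - 1) * Real.exp (-t) := by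
    rw [Real.Gamma_eq_integral hs]
    have hcomm : (∫ x in Set.Ioi (0:ℝ), Real.exp (-x) * x ^ ((n:ℝ) - α - 1))
        = ∫ t in Set.Ioi (0:ℝ), t ^ ((n:ℝ) - α - 1) * Real.exp (-t) :=
      setIntegral_congr_fun measurableSet_Ioi (fun t _ => mul_comm _ _)
    rw [hcomm, ← Set.Ioc_union_Ioi_eq_Ioi hc.le,
      setIntegral_union (Set.Ioc_disjoint_Ioi le_rfl) measurableSet_Ioi hi1 hi2]
  rw [hsplit]
  ring
end

section
/- Let a > 1 be real. For μ > 0 define the probability density ρ_μ(ε) = a e^{a(ε − μ/2)}/(2 sinh(aμ/2)) on [0, μ]. Then lim_{μ→∞} e^{μ} ∬_{[0,μ]²} ρ_μ(ε) ρ_μ(ε') / (e^{ε + ε' − μ} + 1) dε dε' = (a/(a − 1))². -/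
open Real MeasureTheory Filter
open scoped Topology

private lemma refl_int (μ : ℝ) (hμ : 0 ≤ μ) (g : ℝ → ℝ) :
    ∫ x in Set.Icc (0 : ℝ) μ, g (μ - x) = ∫ x in Set.Icc (0 : ℝ) μ, g x := by
  rw [MeasureTheory.integral_Icc_eq_integral_Ioc, MeasureTheory.integral_Icc_eq_integral_Ioc,
    ← intervalIntegral.integral_of_le hμ, ← intervalIntegral.integral_of_le hμ,
    intervalIntegral.integral_comp_sub_left g μ]
  norm_num

private lemma refl2 (μ : ℝ) (hμ : 0 ≤ μ) (g : ℝ → ℝ → ℝ) :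
    ∫ x in Set.Icc (0 : ℝ) μ, ∫ y in Set.Icc (0 : ℝ) μ, g x y
      = ∫ x in Set.Icc (0 : ℝ) μ, ∫ y in Set.Icc (0 : ℝ) μ, g (μ - x) (μ - y) := by
  rw [← refl_int μ hμ (fun x => ∫ y in Set.Icc (0 : ℝ) μ, g x y)]
  exact setIntegral_congr_fun measurableSet_Icc fun x _ => (refl_int μ hμ (g (μ - x))).symm

private lemma key_identity (a μ x y : ℝ) (ha : 1 < a) (hμ : 0 < μ) :
    (a * Real.exp (a * ((μ - x) - μ / 2)) / (2 * Real.sinh (a * μ / 2))) *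
      (a * Real.exp (a * ((μ - y) - μ / 2)) / (2 * Real.sinh (a * μ / 2))) /
      (Real.exp ((μ - x) + (μ - y) - μ) + 1)
    = Real.exp (-μ) * (((1 - Real.exp (-(a * μ)))⁻¹) ^ 2 *
        (a ^ 2 * Real.exp (-((a - 1) * (x + y))) / (1 + Real.exp (x + y - μ)))) := by
  have haμ : 0 < a * μ := by nlinarith
  have e1 : 2 * Real.sinh (a * μ / 2) = Real.exp (a * μ / 2) * (1 - Real.exp (-(a * μ))) := by
    rw [Real.sinh_eq, mul_sub, mul_one, ← Real.exp_add]
    ring_nf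
  have e2 : ∀ z : ℝ, a * Real.exp (a * ((μ - z) - μ / 2))
      = Real.exp (a * μ / 2) * (a * Real.exp (-(a * z))) := by
    intro z
    rw [mul_comm (Real.exp (a * μ / 2)), mul_assoc, ← Real.exp_add]
    ring_nf
  have e3 : Real.exp ((μ - x) + (μ - y) - μ) + 1
      = Real.exp (μ - (x + y)) * (1 + Real.exp (x + y - μ)) := by
    rw [mul_add, mul_one, ← Real.exp_add]
    ring_nf
    rw [Real.exp_zero]
    ring
  have key : Real.exp (-(a * x)) * Real.exp (-(a * y))
      = Real.exp (-μ) * (Real.exp (-((a - 1) * (x + y))) * Real.exp (μ - (x + y))) := by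
    simp only [← Real.exp_add]
    congr 1
    ring
  have h3 : 1 - Real.exp (-(a * μ)) ≠ 0 :=
    ne_of_gt (sub_pos.mpr (Real.exp_lt_one_iff.mpr (by linarith)))
  have h4 : 1 + Real.exp (x + y - μ) ≠ 0 := by positivity
  have h5 : Real.exp (a * μ / 2) ≠ 0 := Real.exp_ne_zero _
  have h6 : Real.exp (μ - (x + y)) ≠ 0 := Real.exp_ne_zero _
  rw [e1, e2, e2, e3, mul_div_mul_left _ _ h5, mul_div_mul_left _ _ h5]
  field_simp
  rw [mul_comm (x + y) (a - 1)]; linear_combination key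

/-- For the asymptotically sparse Type A network with `a = γ − 1 > 1`, density of states
`ρ_μ(ε) = a e^{a(ε − μ/2)}/(2 sinh(aμ/2))` on `[0, μ]` and Fermi–Dirac connection
probability `1/(e^{ε + ε' − μ} + 1)`, the rescaled edge density converges:
`e^μ ∬ ρ_μ(ε) ρ_μ(ε')/(e^{ε + ε' − μ} + 1) dε dε' → (a/(a − 1))²` as `μ → ∞`. -/
theorem sparse_network_nu_constant (a : ℝ) (ha : 1 < a) :
    Tendsto
      (fun μ : ℝ =>
        Real.exp μ *
          ∫ ε in Set.Icc (0 : ℝ) μ, ∫ ε' in Set.Icc (0 : ℝ) μ,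
            (a * Real.exp (a * (ε - μ / 2)) / (2 * Real.sinh (a * μ / 2))) *
              (a * Real.exp (a * (ε' - μ / 2)) / (2 * Real.sinh (a * μ / 2))) /
              (Real.exp (ε + ε' - μ) + 1))
      atTop (nhds ((a / (a - 1)) ^ 2)) := by
  have ha1 : (0 : ℝ) < a - 1 := by linarith
  -- the fixed dominating / limiting function on ℝ²
  set f : ℝ × ℝ → ℝ := Set.indicator (Set.Ici (0 : ℝ) ×ˢ Set.Ici (0 : ℝ))
      (fun z => (a * Real.exp (-((a - 1) * z.1))) * (a * Real.exp (-((a - 1) * z.2)))) with hf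
  -- the moving integrand
  set F : ℝ → ℝ × ℝ → ℝ := fun μ => Set.indicator (Set.Icc (0 : ℝ) μ ×ˢ Set.Icc (0 : ℝ) μ)
      (fun z => a ^ 2 * Real.exp (-((a - 1) * (z.1 + z.2))) / (1 + Real.exp (z.1 + z.2 - μ)))
      with hF
  have hsplit : ∀ z : ℝ × ℝ, (a * Real.exp (-((a - 1) * z.1))) * (a * Real.exp (-((a - 1) * z.2)))
      = a ^ 2 * Real.exp (-((a - 1) * (z.1 + z.2))) := by
    intro z
    rw [mul_mul_mul_comm, ← Real.exp_add, ← pow_two]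
    congr 2
    ring
  -- integrability of the one-dimensional profile
  have h1d : IntegrableOn (fun t : ℝ => a * Real.exp (-((a - 1) * t))) (Set.Ici 0) := by
    have h0 := (exp_neg_integrableOn_Ioi 0 ha1).const_mul a
    rw [integrableOn_Ici_iff_integrableOn_Ioi]
    have heqfun : (fun x : ℝ => a * Real.exp (-(a - 1) * x))
        = fun t : ℝ => a * Real.exp (-((a - 1) * t)) := by
      funext t; rw [neg_mul]
    exact heqfun ▸ h0
  have h1dval : ∫ t in Set.Ici (0 : ℝ), a * Real.exp (-((a - 1) * t)) = a / (a - 1) := by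
    rw [MeasureTheory.integral_Ici_eq_integral_Ioi, MeasureTheory.integral_const_mul]
    have h := integral_rpow_mul_exp_neg_mul_Ioi (a := 1) (r := a - 1) zero_lt_one ha1
    simp only [sub_self, Real.rpow_zero, one_mul, Real.Gamma_one, Real.rpow_one, mul_one] at h
    rw [h]
    field_simp
  -- integrability of f
  have hfint : Integrable f (volume.prod volume) := by
    rw [hf]
    refine (IntegrableOn.integrable_indicator ?_ (measurableSet_Ici.prod measurableSet_Ici))
    rw [IntegrableOn, ← Measure.prod_restrict]
    exact h1d.mul_prod h1d
  -- value of ∫ f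
  have hfval : ∫ z, f z ∂(volume.prod volume) = (a / (a - 1)) ^ 2 := by
    rw [hf, MeasureTheory.integral_indicator (measurableSet_Ici.prod measurableSet_Ici)]
    have hsp := MeasureTheory.setIntegral_prod_mul (μ := volume) (ν := volume)
      (fun t : ℝ => a * Real.exp (-((a - 1) * t))) (fun t : ℝ => a * Real.exp (-((a - 1) * t)))
      (Set.Ici 0) (Set.Ici 0)
    rw [hsp, h1dval, pow_two]
  -- pointwise bound ‖F μ z‖ ≤ f z
  have hbound : ∀ μ : ℝ, ∀ z : ℝ × ℝ, ‖F μ z‖ ≤ f z := by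
    intro μ z
    by_cases hz : z ∈ Set.Icc (0 : ℝ) μ ×ˢ Set.Icc (0 : ℝ) μ
    · rw [hF]
      simp only [Set.indicator_of_mem hz]
      have hz' : z ∈ Set.Ici (0 : ℝ) ×ˢ Set.Ici (0 : ℝ) := ⟨hz.1.1, hz.2.1⟩
      rw [hf]
      simp only [Set.indicator_of_mem hz', hsplit z]
      rw [Real.norm_eq_abs, abs_of_nonneg (by positivity)]
      apply div_le_self (by positivity)
      nlinarith [Real.exp_pos (z.1 + z.2 - μ)]
    · rw [hF]
      simp only [Set.indicator_of_notMem hz, norm_zero]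
      exact Set.indicator_nonneg (fun z _ => by positivity) z
  -- measurability of F μ
  have hcont : ∀ μ : ℝ, Continuous
      (fun z : ℝ × ℝ => a ^ 2 * Real.exp (-((a - 1) * (z.1 + z.2))) / (1 + Real.exp (z.1 + z.2 - μ))) := by
    intro μ
    refine Continuous.div (by fun_prop) (by fun_prop) fun z => ne_of_gt (by positivity)
  have hFmeas : ∀ μ : ℝ, AEStronglyMeasurable (F μ) (volume.prod volume) := by
    intro μ
    rw [hF]
    exact ((hcont μ).aestronglyMeasurable).indicator (measurableSet_Icc.prod measurableSet_Icc)
  -- pointwise limit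
  have hlim : ∀ z : ℝ × ℝ, Tendsto (fun μ => F μ z) atTop (𝓝 (f z)) := by
    intro z
    by_cases hz : z ∈ Set.Ici (0 : ℝ) ×ˢ Set.Ici (0 : ℝ)
    · rw [hf]
      simp only [Set.indicator_of_mem hz, hsplit z]
      have hev : ∀ᶠ μ in atTop, F μ z
          = a ^ 2 * Real.exp (-((a - 1) * (z.1 + z.2))) / (1 + Real.exp (z.1 + z.2 - μ)) := by
        filter_upwards [eventually_ge_atTop (max z.1 z.2)] with μ hμ
        rw [hF]
        refine Set.indicator_of_mem ?_ _
        exact ⟨⟨hz.1, (le_max_left _ _).trans hμ⟩, ⟨hz.2, (le_max_right _ _).trans hμ⟩⟩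
      refine Tendsto.congr' (hev.mono fun μ h => h.symm) ?_
      have hden : Tendsto (fun μ : ℝ => 1 + Real.exp (z.1 + z.2 - μ)) atTop (𝓝 (1 + 0)) := by
        refine tendsto_const_nhds.add (Real.tendsto_exp_atBot.comp ?_)
        exact tendsto_atBot_add_const_left _ _ tendsto_neg_atTop_atBot
      have := (tendsto_const_nhds (x := a ^ 2 * Real.exp (-((a - 1) * (z.1 + z.2))))).div hden (by norm_num)
      simp only [add_zero, div_one] at this
      exact this
    · have h0 : f z = 0 := Set.indicator_of_notMem hz _
      have hFz : ∀ μ : ℝ, F μ z = 0 := by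
        intro μ
        rw [hF]
        refine Set.indicator_of_notMem (fun hmem => hz ⟨hmem.1.1, hmem.2.1⟩) _
      rw [h0]
      simp only [hFz]
      exact tendsto_const_nhds
  -- dominated convergence
  have hmain : Tendsto (fun μ => ∫ z, F μ z ∂(volume.prod volume)) atTop
      (𝓝 (∫ z, f z ∂(volume.prod volume))) := by
    refine tendsto_integral_filter_of_dominated_convergence f
      (Eventually.of_forall hFmeas)
      (Eventually.of_forall fun μ => ae_of_all _ (hbound μ))
      hfint (ae_of_all _ hlim)
  -- identify ∫ F μ with the iterated integral
  have hFub : ∀ μ : ℝ, ∫ z, F μ z ∂(volume.prod volume)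
      = ∫ x in Set.Icc (0 : ℝ) μ, ∫ y in Set.Icc (0 : ℝ) μ,
          a ^ 2 * Real.exp (-((a - 1) * (x + y))) / (1 + Real.exp (x + y - μ)) := by
    intro μ
    have hGint : IntegrableOn
        (fun z : ℝ × ℝ => a ^ 2 * Real.exp (-((a - 1) * (z.1 + z.2))) / (1 + Real.exp (z.1 + z.2 - μ)))
        (Set.Icc (0 : ℝ) μ ×ˢ Set.Icc (0 : ℝ) μ) (volume.prod volume) := by
      rw [← MeasureTheory.Measure.volume_eq_prod]
      exact ((hcont μ).continuousOn).integrableOn_compact (isCompact_Icc.prod isCompact_Icc)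
    rw [hF]
    rw [MeasureTheory.integral_indicator (measurableSet_Icc.prod measurableSet_Icc)]
    have hGint' : Integrable
        (Function.uncurry fun x y : ℝ =>
          a ^ 2 * Real.exp (-((a - 1) * (x + y))) / (1 + Real.exp (x + y - μ)))
        ((volume.restrict (Set.Icc (0 : ℝ) μ)).prod (volume.restrict (Set.Icc (0 : ℝ) μ))) := by
      rw [Measure.prod_restrict]
      exact hGint
    rw [← Measure.prod_restrict]
    exact (MeasureTheory.integral_integral hGint').symm
  -- the prefactor
  have hc : Tendsto (fun μ : ℝ => ((1 - Real.exp (-(a * μ)))⁻¹) ^ 2) atTop (𝓝 1) := by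
    have h0 : Tendsto (fun μ : ℝ => Real.exp (-(a * μ))) atTop (𝓝 0) := by
      refine Real.tendsto_exp_atBot.comp ?_
      exact tendsto_neg_atTop_atBot.comp (Tendsto.const_mul_atTop (by linarith : (0:ℝ) < a) tendsto_id)
    have := (((tendsto_const_nhds (x := (1:ℝ))).sub h0).inv₀ (by norm_num)).pow 2
    simpa using this
  -- eventual equality of the original expression with the transformed one
  have heq : ∀ᶠ μ in atTop,
      Real.exp μ *
          ∫ ε in Set.Icc (0 : ℝ) μ, ∫ ε' in Set.Icc (0 : ℝ) μ,
            (a * Real.exp (a * (ε - μ / 2)) / (2 * Real.sinh (a * μ / 2))) *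
              (a * Real.exp (a * (ε' - μ / 2)) / (2 * Real.sinh (a * μ / 2))) /
              (Real.exp (ε + ε' - μ) + 1)
      = ((1 - Real.exp (-(a * μ)))⁻¹) ^ 2 * ∫ z, F μ z ∂(volume.prod volume) := by
    filter_upwards [eventually_gt_atTop (0 : ℝ)] with μ hμ
    rw [refl2 μ hμ.le (fun ε ε' =>
      (a * Real.exp (a * (ε - μ / 2)) / (2 * Real.sinh (a * μ / 2))) *
        (a * Real.exp (a * (ε' - μ / 2)) / (2 * Real.sinh (a * μ / 2))) /
        (Real.exp (ε + ε' - μ) + 1))]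
    have hinner : ∫ x in Set.Icc (0 : ℝ) μ, ∫ y in Set.Icc (0 : ℝ) μ,
        (a * Real.exp (a * ((μ - x) - μ / 2)) / (2 * Real.sinh (a * μ / 2))) *
          (a * Real.exp (a * ((μ - y) - μ / 2)) / (2 * Real.sinh (a * μ / 2))) /
          (Real.exp ((μ - x) + (μ - y) - μ) + 1)
        = ∫ x in Set.Icc (0 : ℝ) μ, ∫ y in Set.Icc (0 : ℝ) μ,
            Real.exp (-μ) * (((1 - Real.exp (-(a * μ)))⁻¹) ^ 2 *
              (a ^ 2 * Real.exp (-((a - 1) * (x + y))) / (1 + Real.exp (x + y - μ)))) := by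
      refine setIntegral_congr_fun measurableSet_Icc fun x _ => ?_
      refine setIntegral_congr_fun measurableSet_Icc fun y _ => ?_
      exact key_identity a μ x y ha hμ
    rw [hinner]
    simp only [MeasureTheory.integral_const_mul]
    rw [hFub μ, ← mul_assoc, ← Real.exp_add]
    simp
  refine Tendsto.congr' (heq.mono fun μ h => h.symm) ?_
  have := hc.mul hmain
  rw [hfval, one_mul] at this
  exact this
end
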